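/- arXiv:1906.08737 — 15 statements merged into one kernel-verified Lean document; each statement's English description precedes it below -/
import Mathlib

section
/- Let (C, J) be a site and α : F ⟶ G a morphism of presheaves on C. Then the sheafification a_J(α) is a monomorphism in Sh(C, J) if and only if for every object c of C and all elements x, x' ∈ F(c) with α(c)(x) = α(c)(x'), the sieve {f : d ⟶ c | F(f)(x) = F(f)(x')} is J-covering. -/
open CategoryTheory Opposite

universe u

namespace Stmt0

variable {C : Type u} [SmallCategory C]

/-- The sieve of arrows `f : d ⟶ c` equalizing two elements `x, x'` of a presheaf `F` at `c`,
i.e. `{f : d ⟶ c | F(f)(x) = F(f)(x')}`. -/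
def eqSieve (F : Cᵒᵖ ⥤ Type u) {c : C} (x x' : F.obj (op c)) : Sieve c where
  arrows _ f := F.map f.op x = F.map f.op x'
  downward_closed := by
    intro d e f hf g
    simp only [op_comp, Functor.map_comp, types_comp_apply, hf]

/-- Lemma 2.1(i): the sheafification of a morphism of presheaves `α : F ⟶ G` is a monomorphism
in `Sh(C, J)` if and only if for every `c` and all `x, x' ∈ F(c)` with `α(c)(x) = α(c)(x')`,
the sieve `{f : d ⟶ c | F(f)(x) = F(f)(x')}` is `J`-covering. -/
theorem sheafification_mono_iff (J : GrothendieckTopology C) {F G : Cᵒᵖ ⥤ Type u} (α : F ⟶ G) :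
    Mono ((presheafToSheaf J (Type u)).map α) ↔
      ∀ (c : C) (x x' : F.obj (op c)),
        α.app (op c) x = α.app (op c) x' → eqSieve F x x' ∈ J c := by
  constructor
  · intro h c x x' hxx'
    have hm : Mono ((presheafToSheaf J (Type u)).map α).hom :=
      (Sheaf.Hom.mono_iff_presheaf_mono _ _ _).1 h
    have hinj : ∀ (X : Cᵒᵖ),
        Function.Injective ((((presheafToSheaf J (Type u)).map α).hom).app X) := by
      intro X
      rw [← mono_iff_injective]
      exact (NatTrans.mono_iff_mono_app _).1 hm X
    have : Sheaf.IsLocallyInjective ((presheafToSheaf J (Type u)).map α) :=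
      Presheaf.isLocallyInjective_of_injective J _ hinj
    have : Presheaf.IsLocallyInjective J α :=
      (Presheaf.isLocallyInjective_presheafToSheaf_map_iff J α).1 this
    exact Presheaf.equalizerSieve_mem J α x x' hxx'
  · intro h
    have : Presheaf.IsLocallyInjective J α := ⟨fun {X} x y hh => h X.unop x y hh⟩
    have : Sheaf.IsLocallyInjective ((presheafToSheaf J (Type u)).map α) :=
      (Presheaf.isLocallyInjective_presheafToSheaf_map_iff J α).2 this
    exact Sheaf.mono_of_isLocallyInjective _

end Stmt0
end

section
/- Let (C, J) be a site and F a presheaf on C. The lattice of subobjects of the sheafification a_J(F) in Sh(C, J) is isomorphic to the lattice of c_J-closed subobjects of F in the presheaf category, where the isomorphism sends a closed subpresheaf to its image under a_J, and a subobject of a_J(F) to its pullback along the unit F ⟶ a_J(F). -/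
open CategoryTheory CategoryTheory.GrothendieckTopology CategoryTheory.Limits Opposite

universe u

namespace Stmt2

variable {C : Type u} [SmallCategory C]

/-- The pullback of a subobject `S` of the sheafification `a_J(F)` along the unit
`F ⟶ a_J(F)`: its sections at `c` are those `x ∈ F(c)` whose image under the unit lies in
the (set-theoretic) image of (the arrow of) `S`. -/
def unitPullback (J : GrothendieckTopology C) (F : Cᵒᵖ ⥤ Type u)
    (S : Subobject ((presheafToSheaf J (Type u)).obj F)) : Subfunctor F where
  obj c := {x | ∃ s : ((S : Sheaf J (Type u)).val).obj c,
    (Subobject.arrow S).hom.app c s =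
      ((sheafificationAdjunction J (Type u)).unit.app F).app c x}
  map := by
    rintro c c' i x ⟨s, hs⟩
    refine ⟨(S : Sheaf J (Type u)).val.map i s, ?_⟩
    rw [FunctorToTypes.naturality, hs, ← FunctorToTypes.naturality]; rfl

noncomputable section Aux

variable (J : GrothendieckTopology C) (F : Cᵒᵖ ⥤ Type u)

/-- The sheafification as a sheaf. -/
abbrev aF : Sheaf J (Type u) := (presheafToSheaf J (Type u)).obj F

/-- The unit of the sheafification adjunction. -/
abbrev unitF : F ⟶ (aF J F).val := (sheafificationAdjunction J (Type u)).unit.app F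

lemma aF_isSheaf : Presieve.IsSheaf J (aF J F).val :=
  (isSheaf_iff_isSheaf_of_type _ _).mp (aF J F).cond

/-- Preimage of a subpresheaf of the sheafification under the unit. -/
def preim (B : Subfunctor (aF J F).val) : Subfunctor F where
  obj c := {x | (unitF J F).app c x ∈ B.obj c}
  map := by
    intro c c' i x hx
    show (unitF J F).app c' (F.map i x) ∈ B.obj c'
    rw [FunctorToTypes.naturality]
    exact B.map i hx

lemma preim_mono {B B' : Subfunctor (aF J F).val} (h : B ≤ B') :
    preim J F B ≤ preim J F B' := fun c _ hx => h c hx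

lemma sheafify_mono' {G : Cᵒᵖ ⥤ Type u} {A B : Subfunctor G} (h : A ≤ B) :
    A.sheafify J ≤ B.sheafify J := fun U x hx =>
  J.superset_covering (fun V f hf => h (op V) hf) hx

lemma preim_closed {B : Subfunctor (aF J F).val} (hB : B.sheafify J = B) :
    (preim J F B).sheafify J = preim J F B := by
  refine le_antisymm ?_ ((preim J F B).le_sheafify J)
  intro U x hx
  show (unitF J F).app U x ∈ B.obj U
  rw [← hB]
  show B.sieveOfSection ((unitF J F).app U x) ∈ J (unop U)
  refine J.superset_covering ?_ hx
  intro V f hf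
  show (aF J F).val.map f.op ((unitF J F).app U x) ∈ B.obj (op V)
  rw [← FunctorToTypes.naturality]
  exact hf

/-- A subpresheaf of the sheafification which is a sheaf, as a sheaf. -/
def subSheaf (B : Subfunctor (aF J F).val) (hB : Presieve.IsSheaf J B.toFunctor) :
    Sheaf J (Type u) :=
  ⟨B.toFunctor, (isSheaf_iff_isSheaf_of_type _ _).mpr hB⟩

/-- The inclusion of a subsheaf as a sheaf morphism. -/
def subHom (B : Subfunctor (aF J F).val) (hB : Presieve.IsSheaf J B.toFunctor) :
    subSheaf J F B hB ⟶ aF J F := ObjectProperty.homMk B.ι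

instance (B : Subfunctor (aF J F).val) (hB : Presieve.IsSheaf J B.toFunctor) :
    Mono (subHom J F B hB) :=
  (Sheaf.Hom.mono_iff_presheaf_mono _ _ _).mpr (by show Mono B.ι; infer_instance)

/-- The subobject associated with a subsheaf. -/
def sub (B : Subfunctor (aF J F).val) (hB : Presieve.IsSheaf J B.toFunctor) :
    Subobject (aF J F) := Subobject.mk (subHom J F B hB)

lemma sub_congr {B B' : Subfunctor (aF J F).val} (h : B = B')
    {hB : Presieve.IsSheaf J B.toFunctor} {hB' : Presieve.IsSheaf J B'.toFunctor} :
    sub J F B hB = sub J F B' hB' := by subst h; rfl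

lemma sub_le_sub {B B' : Subfunctor (aF J F).val} (hB : Presieve.IsSheaf J B.toFunctor)
    (hB' : Presieve.IsSheaf J B'.toFunctor) (h : B ≤ B') :
    sub J F B hB ≤ sub J F B' hB' :=
  Subobject.mk_le_mk_of_comm (ObjectProperty.homMk (Subfunctor.homOfLe h))
    (by apply Sheaf.hom_ext; exact Subfunctor.homOfLe_ι h)

lemma le_of_sub_le {B B' : Subfunctor (aF J F).val} (hB : Presieve.IsSheaf J B.toFunctor)
    (hB' : Presieve.IsSheaf J B'.toFunctor) (h : sub J F B hB ≤ sub J F B' hB') :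
    B ≤ B' := by
  intro U x hx
  have h2 := ConcreteCategory.congr_hom (congr_app (congr_arg (fun f => f.hom)
    (Subobject.ofMkLEMk_comp h)) U) ⟨x, hx⟩
  exact (show ((Subobject.ofMkLEMk (subHom J F B hB) (subHom J F B' hB') h).hom.app U
    ⟨x, hx⟩).1 = x from h2) ▸ ((Subobject.ofMkLEMk _ _ h).hom.app U ⟨x, hx⟩).2

lemma M_isSheaf (S : Subobject (aF J F)) :
    Presieve.IsSheaf J (Subfunctor.range (Subobject.arrow S).hom).toFunctor := by
  haveI : Mono (Subobject.arrow S).hom :=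
    (Sheaf.Hom.mono_iff_presheaf_mono _ _ _).mp inferInstance
  exact Presieve.isSheaf_iso J (asIso (Subfunctor.toRange (Subobject.arrow S).hom))
    ((isSheaf_iff_isSheaf_of_type _ _).mp (Subobject.underlying.obj S).cond)

lemma sub_M (S : Subobject (aF J F)) :
    sub J F (Subfunctor.range (Subobject.arrow S).hom) (M_isSheaf J F S) = S := by
  haveI : Mono (Subobject.arrow S).hom :=
    (Sheaf.Hom.mono_iff_presheaf_mono _ _ _).mp inferInstance
  conv_rhs => rw [← Subobject.mk_arrow S]
  refine Subobject.mk_eq_mk_of_comm _ _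
    ⟨ObjectProperty.homMk (asIso (Subfunctor.toRange (Subobject.arrow S).hom)).inv,
     ObjectProperty.homMk (Subfunctor.toRange (Subobject.arrow S).hom), ?_, ?_⟩ ?_
  · apply Sheaf.hom_ext; exact (asIso (Subfunctor.toRange (Subobject.arrow S).hom)).inv_hom_id
  · apply Sheaf.hom_ext; exact (asIso (Subfunctor.toRange (Subobject.arrow S).hom)).hom_inv_id
  · apply Sheaf.hom_ext
    show inv (Subfunctor.toRange (Subobject.arrow S).hom) ≫ (Subobject.arrow S).hom = _
    refine (IsIso.inv_comp_eq _).mpr ?_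
    exact (Subfunctor.toRange_ι (Subobject.arrow S).hom).symm

lemma M_sub (B : Subfunctor (aF J F).val) (hB : Presieve.IsSheaf J B.toFunctor) :
    Subfunctor.range (Subobject.arrow (sub J F B hB)).hom = B := by
  unfold sub
  apply Subfunctor.ext
  funext U
  ext x
  constructor
  · rintro ⟨y, rfl⟩
    have h2 := ConcreteCategory.congr_hom (congr_app (congr_arg (fun f => f.hom)
      (Subobject.underlyingIso_hom_comp_eq_mk (subHom J F B hB))) U) y
    rw [← h2]
    exact (((Subobject.underlyingIso (subHom J F B hB)).hom.hom.app U y)).2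
  · intro hx
    refine ⟨(Subobject.underlyingIso (subHom J F B hB)).inv.hom.app U ⟨x, hx⟩, ?_⟩
    exact ConcreteCategory.congr_hom (congr_app (congr_arg (fun f => f.hom)
      (Subobject.underlyingIso_arrow (subHom J F B hB))) U) ⟨x, hx⟩

/-- The closure of the image of a subpresheaf under the unit. -/
abbrev push (A : Subfunctor F) : Subfunctor (aF J F).val :=
  (Subfunctor.range (A.ι ≫ unitF J F)).sheafify J

lemma push_isSheaf (A : Subfunctor F) : Presieve.IsSheaf J (push J F A).toFunctor :=
  Subfunctor.sheafify_isSheaf _ (aF_isSheaf J F)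

lemma push_mono {A A' : Subfunctor F} (h : A ≤ A') : push J F A ≤ push J F A' := by
  apply sheafify_mono'
  rintro U y ⟨t, rfl⟩
  exact ⟨⟨t.val, h U t.2⟩, rfl⟩

lemma push_preim (S : Subobject (aF J F)) :
    push J F (preim J F (Subfunctor.range (Subobject.arrow S).hom))
      = Subfunctor.range (Subobject.arrow S).hom := by
  haveI : Presheaf.IsLocallySurjective J (unitF J F) :=
    inferInstanceAs (Presheaf.IsLocallySurjective J (CategoryTheory.toSheafify J F))
  apply le_antisymm
  · refine Subfunctor.sheafify_le _ _ ?_ (aF_isSheaf J F) (M_isSheaf J F S)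
    rintro U x ⟨y, rfl⟩
    exact y.2
  · intro U y hy
    show (Subfunctor.range ((preim J F (Subfunctor.range (Subobject.arrow S).hom)).ι
      ≫ unitF J F)).sieveOfSection y ∈ J (unop U)
    refine J.superset_covering ?_ (Presheaf.imageSieve_mem J (unitF J F) y)
    rintro V f ⟨x, hx⟩
    refine ⟨⟨x, ?_⟩, hx⟩
    show (unitF J F).app (op V) x ∈ (Subfunctor.range (Subobject.arrow S).hom).obj (op V)
    have hx' : (unitF J F).app (op V) x = (aF J F).val.map f.op y := hx
    rw [hx']
    exact (Subfunctor.range (Subobject.arrow S).hom).map f.op hy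

lemma preim_push (A : Subfunctor F) (hA : A.sheafify J = A) :
    preim J F (push J F A) = A := by
  haveI : Presheaf.IsLocallyInjective J (unitF J F) :=
    inferInstanceAs (Presheaf.IsLocallyInjective J (CategoryTheory.toSheafify J F))
  apply le_antisymm
  · intro U x hx
    have hx' : (Subfunctor.range (A.ι ≫ unitF J F)).sieveOfSection
        ((unitF J F).app U x) ∈ J (unop U) := hx
    choose a ha using fun (V : C) (f : V ⟶ unop U)
      (hf : (Subfunctor.range (A.ι ≫ unitF J F)).sieveOfSection ((unitF J F).app U x) f) => hf
    rw [← hA]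
    show A.sieveOfSection x ∈ J (unop U)
    refine J.superset_covering ?_
      (J.bind_covering hx' (fun V f hf => Presheaf.equalizerSieve_mem J (unitF J F) _ _
        ((ha V f hf).trans (NatTrans.naturality_apply (unitF J F) f.op x).symm)))
    rintro W g ⟨V, i, f, hf, hi, rfl⟩
    show F.map (i ≫ f).op x ∈ A.obj (op W)
    have hi' : F.map i.op (A.ι.app (op V) (a V f hf)) = F.map i.op (F.map f.op x) := hi
    rw [op_comp, FunctorToTypes.map_comp_apply, ← hi']
    exact A.map i.op (a V f hf).2
  · intro U x hx
    show (unitF J F).app U x ∈ (push J F A).obj U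
    exact (Subfunctor.range (A.ι ≫ unitF J F)).le_sheafify J U ⟨⟨x, hx⟩, rfl⟩

lemma unitPullback_eq (S : Subobject (aF J F)) :
    unitPullback J F S = preim J F (Subfunctor.range (Subobject.arrow S).hom) := rfl

end Aux

/-- Proposition 2.3: for any presheaf `F` on a site `(C, J)`, the lattice of subobjects of the
sheafification `a_J(F)` in `Sh(C, J)` is isomorphic to the lattice of `c_J`-closed subobjects
(subpresheaves) of `F`, the isomorphism sending a subobject of `a_J(F)` to its pullback along
the unit `F ⟶ a_J(F)` (and, inversely, a closed subpresheaf to its image under `a_J`). -/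
theorem subobject_sheafification_orderIso (J : GrothendieckTopology C) (F : Cᵒᵖ ⥤ Type u) :
    ∃ e : {A : Subfunctor F // A.sheafify J = A} ≃o
        Subobject ((presheafToSheaf J (Type u)).obj F),
      ∀ S : Subobject ((presheafToSheaf J (Type u)).obj F),
        (e.symm S).1 = unitPullback J F S := by
  have hclosed : ∀ S : Subobject (aF J F),
      (unitPullback J F S).sheafify J = unitPullback J F S := fun S => by
    rw [unitPullback_eq]
    exact preim_closed J F
      (((Subfunctor.range (Subobject.arrow S).hom).eq_sheafify (aF_isSheaf J F)
        (M_isSheaf J F S)).symm)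
  have hleft : ∀ A : {A : Subfunctor F // A.sheafify J = A},
      unitPullback J F (sub J F (push J F A.1) (push_isSheaf J F A.1)) = A.1 := fun A => by
    rw [unitPullback_eq, M_sub]
    exact preim_push J F A.1 A.2
  have hright : ∀ S : Subobject (aF J F),
      sub J F (push J F (unitPullback J F S))
        (push_isSheaf J F (unitPullback J F S)) = S := fun S => by
    rw [unitPullback_eq]
    exact (sub_congr J F (push_preim J F S)).trans (sub_M J F S)
  refine ⟨⟨⟨fun A => sub J F (push J F A.1) (push_isSheaf J F A.1),
    fun S => ⟨unitPullback J F S, hclosed S⟩,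
    fun A => Subtype.ext (hleft A), hright⟩, ?_⟩, fun S => rfl⟩
  intro A A'
  constructor
  · intro h
    have h2 := preim_mono J F (le_of_sub_le J F _ _ h)
    rwa [preim_push J F A.1 A.2, preim_push J F A'.1 A'.2] at h2
  · intro h
    exact sub_le_sub J F _ _ (push_mono J F h)

end Stmt2
end

section
/- Let L : F ⟶ E and R : E ⟶ F be adjoint functors with L ⊣ R between categories E and F with E having enough structure (e.g. a topos). Then R is faithful if and only if for every object e of E there exist an object u of F and an epimorphism L(u) ⟶ e. -/
open CategoryTheory

universe v₁ v₂ u₁ u₂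

namespace Stmt3

/-- Proposition 4.3: given an adjunction `L ⊣ R` with `R : E ⥤ F` and `L : F ⥤ E`, the right
adjoint `R` is faithful if and only if for every object `e` of `E` there exist an object `u` of
`F` and an epimorphism `L(u) ⟶ e`. -/
theorem rightAdjoint_faithful_iff {E : Type u₁} {F : Type u₂} [Category.{v₁} E] [Category.{v₂} F]
    (L : F ⥤ E) (R : E ⥤ F) (adj : L ⊣ R) :
    R.Faithful ↔ ∀ e : E, ∃ (u : F) (p : L.obj u ⟶ e), Epi p := by
  constructor
  · intro hR e
    exact ⟨R.obj e, adj.counit.app e, adj.counit_epi_of_R_faithful e⟩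
  · intro h
    constructor
    intro e e' f g hfg
    obtain ⟨u, p, hp⟩ := h e
    have h1 : adj.homEquiv u e' (p ≫ f) = adj.homEquiv u e' (p ≫ g) := by
      rw [adj.homEquiv_naturality_right, adj.homEquiv_naturality_right, hfg]
    have := (adj.homEquiv u e').injective h1
    exact (cancel_epi p).mp this

end Stmt3
end

section
/- Let p : C ⟶ D be a (Street) fibration and P a presieve in C consisting entirely of p-cartesian arrows with common codomain c. Then the sieve generated by P equals the sieve S of all arrows f with codomain c such that p(f) lies in the sieve generated by p(P); that is, ⟨P⟩ = {f : dom(f) ⟶ c | p(f) ∈ ⟨p(P)⟩}. -/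
open CategoryTheory

universe v₁ v₂ u₁ u₂

namespace Stmt5

variable {C : Type u₁} {D : Type u₂} [Category.{v₁} C] [Category.{v₂} D]

/-- An arrow `φ : c' ⟶ c` is cartesian relative to `p : C ⥤ D` if for every `ψ : c'' ⟶ c` and
`g : p(c'') ⟶ p(c')` with `p(φ) ∘ g = p(ψ)` there is a unique `χ : c'' ⟶ c'` with `φ ∘ χ = ψ`
and `p(χ) = g`. -/
def IsCartesianArrow (p : C ⥤ D) {c' c : C} (φ : c' ⟶ c) : Prop :=
  ∀ {c'' : C} (ψ : c'' ⟶ c) (g : p.obj c'' ⟶ p.obj c'),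
    g ≫ p.map φ = p.map ψ → ∃! χ : c'' ⟶ c', χ ≫ φ = ψ ∧ p.map χ = g

/-- A functor `p : C ⥤ D` is a fibration in the sense of Street if for every arrow
`f : d ⟶ p(c)` in `D` there are a cartesian arrow `φ : c' ⟶ c` and an isomorphism
`α : p(c') ≅ d` with `f ∘ α = p(φ)`. -/
def IsStreetFibration (p : C ⥤ D) : Prop :=
  ∀ {c : C} {d : D} (f : d ⟶ p.obj c),
    ∃ (c' : C) (φ : c' ⟶ c) (α : p.obj c' ≅ d),
      IsCartesianArrow p φ ∧ α.hom ≫ f = p.map φ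

/-- Lemma 2.15(iii): if `p : C ⥤ D` is a fibration and `P` is a presieve on `c` consisting
entirely of `p`-cartesian arrows, then the sieve generated by `P` is exactly the sieve of arrows
`f` with codomain `c` such that `p(f)` belongs to the sieve generated by `p(P)`. -/
theorem generate_cartesian_presieve_eq (p : C ⥤ D) (hp : IsStreetFibration p) {c : C}
    (P : Presieve c) (hP : ∀ ⦃c' : C⦄ (f : c' ⟶ c), P f → IsCartesianArrow p f) :
    Sieve.generate P =
      Sieve.functorPullback p (Sieve.generate (Presieve.functorPushforward p P)) := by
  ext X f
  constructor
  · rintro ⟨Y, g, h, hh, rfl⟩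
    exact ⟨p.obj Y, p.map g, p.map h, ⟨Y, h, 𝟙 _, hh, by simp⟩, (p.map_comp g h).symm⟩
  · rintro ⟨Y, u, v, ⟨Z, φ, w, hφ, rfl⟩, hf⟩
    obtain ⟨χ, ⟨hχ₁, _⟩, _⟩ := hP φ hφ f (u ≫ w) (by rw [Category.assoc, ← hf])
    exact ⟨Z, χ, φ, hφ, hχ₁⟩

end Stmt5
end

section
/- Let p : C ⟶ D be a fibration and R a sieve on p(c) in D. Then the sieve S = {f with codomain c | p(f) ∈ R} is generated by the collection of its cartesian arrows. -/
open CategoryTheory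

universe v₁ v₂ u₁ u₂

namespace Stmt6

variable {C : Type u₁} {D : Type u₂} [Category.{v₁} C] [Category.{v₂} D]

/-- An arrow `φ : c' ⟶ c` is cartesian relative to `p : C ⥤ D`. -/
def IsCartesianArrow (p : C ⥤ D) {c' c : C} (φ : c' ⟶ c) : Prop :=
  ∀ {c'' : C} (ψ : c'' ⟶ c) (g : p.obj c'' ⟶ p.obj c'),
    g ≫ p.map φ = p.map ψ → ∃! χ : c'' ⟶ c', χ ≫ φ = ψ ∧ p.map χ = g

/-- A functor `p : C ⥤ D` is a fibration in the sense of Street. -/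
def IsStreetFibration (p : C ⥤ D) : Prop :=
  ∀ {c : C} {d : D} (f : d ⟶ p.obj c),
    ∃ (c' : C) (φ : c' ⟶ c) (α : p.obj c' ≅ d),
      IsCartesianArrow p φ ∧ α.hom ≫ f = p.map φ

/-- Lemma 2.15(v): if `p : C ⥤ D` is a fibration and `R` is a sieve on `p(c)` in `D`, then the
sieve `S = {f with codomain c | p(f) ∈ R}` is generated by the collection of its cartesian
arrows. -/
theorem functorPullback_generated_by_cartesian (p : C ⥤ D) (hp : IsStreetFibration p)
    {c : C} (R : Sieve (p.obj c)) :
    Sieve.functorPullback p R =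
      Sieve.generate (fun _ f => R.arrows (p.map f) ∧ IsCartesianArrow p f) := by
  ext c'' f
  constructor
  · intro hf
    obtain ⟨c', φ, α, hcart, hα⟩ := hp (p.map f)
    obtain ⟨χ, ⟨hχ, -⟩, -⟩ := hcart f α.inv (by rw [← hα, Iso.inv_hom_id_assoc])
    exact ⟨c', χ, φ, ⟨by rw [← hα]; exact R.downward_closed hf _, hcart⟩, hχ⟩
  · rintro ⟨c', g, h, ⟨hh, -⟩, rfl⟩
    simpa only [Sieve.functorPullback_apply, Presieve.functorPullback_mem, Functor.map_comp]
      using R.downward_closed hh (p.map g)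

end Stmt6
end

section
/- Let p : C ⟶ D be a fibration and K a Grothendieck topology on D. Then the smallest Grothendieck topology M on C making p a comorphism of sites (C, M) ⟶ (D, K) admits the following description: a sieve R on an object c of C is M-covering if and only if the family of p-cartesian arrows contained in R is sent by p to a K-covering family. -/
open CategoryTheory

universe v₁ v₂ u₁ u₂

namespace Stmt7

variable {C : Type u₁} {D : Type u₂} [Category.{v₁} C] [Category.{v₂} D]

/-- An arrow `φ : c' ⟶ c` is cartesian relative to `p : C ⥤ D`. -/
def IsCartesianArrow (p : C ⥤ D) {c' c : C} (φ : c' ⟶ c) : Prop :=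
  ∀ {c'' : C} (ψ : c'' ⟶ c) (g : p.obj c'' ⟶ p.obj c'),
    g ≫ p.map φ = p.map ψ → ∃! χ : c'' ⟶ c', χ ≫ φ = ψ ∧ p.map χ = g

/-- A functor `p : C ⥤ D` is a fibration in the sense of Street. -/
def IsStreetFibration (p : C ⥤ D) : Prop :=
  ∀ {c : C} {d : D} (f : d ⟶ p.obj c),
    ∃ (c' : C) (φ : c' ⟶ c) (α : p.obj c' ≅ d),
      IsCartesianArrow p φ ∧ α.hom ≫ f = p.map φ

/-- `p` is a comorphism of sites `(C, M) ⟶ (D, K)`, i.e. it has the covering-lifting property: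
every `K`-covering sieve on `p(c)` contains the image under `p` of an `M`-covering sieve. -/
def HasCoverLifting (p : C ⥤ D) (M : GrothendieckTopology C) (K : GrothendieckTopology D) :
    Prop :=
  ∀ ⦃c : C⦄ (S : Sieve (p.obj c)), S ∈ K (p.obj c) →
    ∃ R ∈ M c, ∀ ⦃d : C⦄ (f : d ⟶ c), R.arrows f → S.arrows (p.map f)

/-- Composition of cartesian arrows is cartesian. -/
lemma IsCartesianArrow.comp {p : C ⥤ D} {a b c : C} {v : b ⟶ a} {u : a ⟶ c}
    (hv : IsCartesianArrow p v) (hu : IsCartesianArrow p u) :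
    IsCartesianArrow p (v ≫ u) := by
  intro e ψ g hg
  rw [p.map_comp, ← Category.assoc] at hg
  obtain ⟨χ₁, ⟨hχ₁₁, hχ₁₂⟩, hχ₁u⟩ := hu ψ (g ≫ p.map v) hg
  obtain ⟨χ, ⟨hχ₁, hχ₂⟩, hχu⟩ := hv χ₁ g hχ₁₂.symm
  refine ⟨χ, ⟨by rw [← Category.assoc, hχ₁, hχ₁₁], hχ₂⟩, ?_⟩
  rintro χ' ⟨h1, h2⟩
  have : χ' ≫ v = χ₁ := by
    refine hχ₁u (χ' ≫ v) ⟨by rw [Category.assoc, h1], ?_⟩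
    rw [p.map_comp, h2]
  exact hχu χ' ⟨this, h2⟩

/-- The sieve on `p.obj c` generated by the `p`-images of the cartesian arrows in `R`. -/
def cartSieve (p : C ⥤ D) {c : C} (R : Sieve c) : Sieve (p.obj c) :=
  Sieve.generate (Presieve.functorPushforward p
    (fun _ f => R.arrows f ∧ IsCartesianArrow p f))

lemma mem_cartSieve {p : C ⥤ D} {c : C} {R : Sieve c} {X : D} {f : X ⟶ p.obj c} :
    (cartSieve p R).arrows f ↔
      ∃ (e : C) (u : e ⟶ c) (h : X ⟶ p.obj e),
        R.arrows u ∧ IsCartesianArrow p u ∧ f = h ≫ p.map u := by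
  constructor
  · rintro ⟨Y, l, g, ⟨Z, u, h, ⟨hu, hcu⟩, rfl⟩, rfl⟩
    exact ⟨Z, u, l ≫ h, hu, hcu, by simp⟩
  · rintro ⟨e, u, h, hu, hcu, rfl⟩
    exact ⟨X, 𝟙 X, h ≫ p.map u, ⟨e, u, h, ⟨hu, hcu⟩, rfl⟩, by simp⟩

/-- Theorem 2.16: if `p : C ⥤ D` is a fibration and `K` a Grothendieck topology on `D`, then
the smallest Grothendieck topology `M` on `C` making `p` a comorphism of sites
`(C, M) ⟶ (D, K)` is described as follows: a sieve `R` on an object `c` of `C` is `M`-covering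
if and only if the family of `p`-cartesian arrows contained in `R` is sent by `p` to a
`K`-covering family. -/
theorem smallest_comorphism_topology_of_fibration (p : C ⥤ D) (hp : IsStreetFibration p)
    (K : GrothendieckTopology D) (M : GrothendieckTopology C)
    (h1 : HasCoverLifting p M K)
    (h2 : ∀ M' : GrothendieckTopology C, HasCoverLifting p M' K → M ≤ M') :
    ∀ (c : C) (R : Sieve c),
      R ∈ M c ↔
        Sieve.generate (Presieve.functorPushforward p
          (fun _ f => R.arrows f ∧ IsCartesianArrow p f)) ∈ K (p.obj c) := by
  -- the candidate topology M'
  let M' : GrothendieckTopology C :=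
    { sieves := fun c => {R | cartSieve p R ∈ K (p.obj c)}
      top_mem' := by
        intro c
        refine K.superset_covering ?_ (K.top_mem (p.obj c))
        rintro X f -
        obtain ⟨c', φ, α, hφ, hα⟩ := hp f
        rw [mem_cartSieve]
        exact ⟨c', φ, α.inv, trivial, hφ, by rw [← hα]; simp⟩
      pullback_stable' := by
        intro c d R f hR
        refine K.superset_covering ?_ (K.pullback_stable (p.map f) hR)
        intro X g hg
        rw [Sieve.pullback_apply, mem_cartSieve] at hg
        obtain ⟨a, u, k, hu, hcu, heq⟩ := hg
        -- lift g to a cartesian arrow over d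
        obtain ⟨b, v, α, hv, hα⟩ := hp g
        rw [mem_cartSieve]
        refine ⟨b, v, α.inv, ?_, hv, by simp [← hα]⟩
        -- v ≫ f ∈ R since p (v ≫ f) factors through p u, u cartesian
        have : (α.hom ≫ k) ≫ p.map u = p.map (v ≫ f) := by
          rw [p.map_comp, ← hα]
          simp only [Category.assoc]
          rw [← heq]
        obtain ⟨χ, ⟨hχ, -⟩, -⟩ := hcu (v ≫ f) (α.hom ≫ k) this
        show R.arrows (v ≫ f)
        rw [← hχ]
        exact R.downward_closed hu χ
      transitive' := by
        intro c S hS R hR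
        refine K.transitive hS (cartSieve p R) ?_
        intro X g hg
        rw [mem_cartSieve] at hg
        obtain ⟨a, u, k, hu, hcu, rfl⟩ := hg
        have ha : cartSieve p (R.pullback u) ∈ K (p.obj a) := hR hu
        have hle : cartSieve p (R.pullback u) ≤ (cartSieve p R).pullback (p.map u) := by
          intro X h hh
          rw [mem_cartSieve] at hh
          obtain ⟨b, v, m, hv, hcv, rfl⟩ := hh
          rw [Sieve.pullback_apply, mem_cartSieve]
          exact ⟨b, v ≫ u, m, hv, hcv.comp hcu, by simp⟩
        have : (cartSieve p R).pullback (p.map u) ∈ K (p.obj a) :=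
          K.superset_covering hle ha
        have := K.pullback_stable k this
        rwa [← Sieve.pullback_comp] at this
    }
  -- M' has cover lifting
  have hCL : HasCoverLifting p M' K := by
    intro c S hS
    refine ⟨S.functorPullback p, ?_, fun d f hf => hf⟩
    show cartSieve p _ ∈ K (p.obj c)
    refine K.superset_covering ?_ hS
    intro X g hg
    obtain ⟨c', φ, α, hφ, hα⟩ := hp g
    rw [mem_cartSieve]
    refine ⟨c', φ, α.inv, ?_, hφ, by simp [← hα]⟩
    show S.arrows (p.map φ)
    rw [← hα]
    exact S.downward_closed hg _
  intro c R
  constructor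
  · intro hR
    exact h2 M' hCL _ hR
  · intro hT
    obtain ⟨R₀, hR₀, hR₀R⟩ := h1 _ hT
    refine M.superset_covering ?_ hR₀
    intro X f hf
    have := hR₀R f hf
    rw [show Sieve.generate (Presieve.functorPushforward p
        (fun _ f => R.arrows f ∧ IsCartesianArrow p f)) = cartSieve p R from rfl,
      mem_cartSieve] at this
    obtain ⟨e, u, h, hu, hcu, heq⟩ := this
    obtain ⟨χ, ⟨hχ, -⟩, -⟩ := hcu f h heq.symm
    rw [← hχ]
    exact R.downward_closed hu χ

end Stmt7
end

section
/- Let J' be a collection of sieves on a category C and J the Grothendieck topology generated by J'. Then every morphism of sites (C, J') ⟶ (D, K) (i.e., a covering-flat functor sending sieves in J' to K-covering families) is a morphism of sites (C, J) ⟶ (D, K); in particular, the collection of sieves S in C such that F(S) generates a K-covering sieve forms a Grothendieck topology whenever F is covering-flat. -/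
open CategoryTheory Limits

universe v₁ v₂ u₁ u₂

namespace Stmt8

variable {C : Type u₁} {D : Type u₂} [Category.{v₁} C] [Category.{v₂} D]

/-- Given a finite diagram `X` in `C` and a cone `c` over `X ⋙ F` in `D`, the sieve on the
vertex of `c` consisting of those arrows `g` such that the cone restricted along `g` factors
through the `F`-image of a cone over `X`. -/
def coneFactorSieve (F : C ⥤ D) {I : Type} [SmallCategory I] (X : I ⥤ C)
    (c : Cone (X ⋙ F)) : Sieve c.pt where
  arrows _ g := ∃ (z : Cone X) (w : _ ⟶ F.obj z.pt),
    ∀ i : I, w ≫ F.map (z.π.app i) = g ≫ c.π.app i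
  downward_closed := by
    rintro d' e g ⟨z, w, hw⟩ h
    exact ⟨z, h ≫ w, fun i => by simp only [Category.assoc, hw i]⟩

/-- A functor `F : C ⥤ D` is covering-flat with respect to a Grothendieck topology `K` on `D`
if for every finite diagram in `C`, every cone over its composite with `F` factors `K`-locally
through the `F`-image of a cone over the diagram. -/
def CoveringFlat (F : C ⥤ D) (K : GrothendieckTopology D) : Prop :=
  ∀ (I : Type) [SmallCategory I] [FinCategory I] (X : I ⥤ C) (c : Cone (X ⋙ F)),
    coneFactorSieve F X c ∈ K c.pt

/-- Proposition 2.10: let `J'` be a collection of sieves on `C` and `J` the Grothendieck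
topology generated by it.  Then every morphism of sites `(C, J') ⟶ (D, K)` (i.e. a
covering-flat functor sending the sieves of `J'` to families generating `K`-covering sieves)
is a morphism of sites `(C, J) ⟶ (D, K)`; in particular, for a covering-flat functor `F`, the
collection of sieves `S` such that `F(S)` generates a `K`-covering sieve is a Grothendieck
topology. -/
theorem morphism_of_sites_generated (K : GrothendieckTopology D) (F : C ⥤ D)
    (J' : ∀ c : C, Set (Sieve c)) (J : GrothendieckTopology C)
    (hJ1 : ∀ (c : C) (S : Sieve c), S ∈ J' c → S ∈ J c)
    (hJ2 : ∀ J₂ : GrothendieckTopology C,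
      (∀ (c : C) (S : Sieve c), S ∈ J' c → S ∈ J₂ c) → J ≤ J₂)
    (hflat : CoveringFlat F K)
    (hcov : ∀ (c : C) (S : Sieve c), S ∈ J' c →
      Sieve.functorPushforward F S ∈ K (F.obj c)) :
    (∀ (c : C) (S : Sieve c), S ∈ J c → Sieve.functorPushforward F S ∈ K (F.obj c)) ∧
    ∃ JF : GrothendieckTopology C, ∀ (c : C) (S : Sieve c),
      S ∈ JF c ↔ Sieve.functorPushforward F S ∈ K (F.obj c) := by
  -- define the candidate topology
  let JF : GrothendieckTopology C :=
    { sieves := fun c => {S | Sieve.functorPushforward F S ∈ K (F.obj c)}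
      top_mem' := by
        intro c
        apply K.superset_covering _ (K.top_mem (F.obj c))
        rintro d g -
        exact ⟨c, 𝟙 c, g, trivial, by simp⟩
      pullback_stable' := by
        intro c d S g hS
        -- pull back the pushforward along `F.map g`
        have h1 : (Sieve.functorPushforward F S).pullback (F.map g) ∈ K (F.obj d) :=
          K.pullback_stable (F.map g) hS
        refine K.transitive h1 _ ?_
        rintro e r ⟨c', f, u, hf, heq⟩
        -- build a cone on `cospan f g` with vertex `e`
        let c0 : Cone (cospan f g ⋙ F) :=
          (Cone.postcompose (cospanCompIso F f g).inv).obj (PullbackCone.mk u r heq.symm)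
        have hc := hflat _ (cospan f g) c0
        refine K.superset_covering ?_ hc
        rintro e' q ⟨z, w, hw⟩
        have hleft := hw WalkingCospan.left
        have hright := hw WalkingCospan.right
        simp only [c0, Cone.postcompose_obj_π, NatTrans.comp_app, PullbackCone.mk_π_app,
          cospanCompIso_inv_app_left, cospanCompIso_inv_app_right, Category.comp_id] at hleft hright
        -- the cone `z` gives a commuting square
        have hz1 := z.w WalkingCospan.Hom.inl
        have hz2 := z.w WalkingCospan.Hom.inr
        simp only [cospan_map_inl, cospan_map_inr] at hz1 hz2
        have hmem : (S.pullback g) (z.π.app WalkingCospan.right) := by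
          show S (z.π.app WalkingCospan.right ≫ g)
          have h3 : S.arrows (z.π.app WalkingCospan.left ≫ f) := S.downward_closed hf _
          have e := hz2.trans hz1.symm
          exact (congrArg (fun x => S.arrows x) e).mpr h3
        exact ⟨z.pt, z.π.app WalkingCospan.right, w, hmem, (congrArg (q ≫ ·) (Category.comp_id r)).symm.trans hright.symm⟩
      transitive' := by
        intro c S hS R hR
        refine K.transitive hS _ ?_
        rintro e g ⟨c', f, u, hf, heq⟩
        have h1 : (Sieve.functorPushforward F (R.pullback f)).pullback u ∈ K e :=
          K.pullback_stable u (hR hf)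
        refine K.superset_covering ?_ h1
        rintro e' t ht
        obtain ⟨c'', f', u', hf', heq'⟩ := ht
        show (Sieve.functorPushforward F R) (t ≫ g)
        refine ⟨c'', f' ≫ f, u', hf', ?_⟩
        rw [heq, ← Category.assoc, heq', F.map_comp, Category.assoc] }
  refine ⟨fun c S hs => hJ2 JF hcov _ hs, JF, fun c S => Iff.rfl⟩

end Stmt8
end

section
/- Let F : C ⟶ D be a functor and K a Grothendieck topology on D, and suppose F is J-full and J-faithful for a Grothendieck topology J on C. Then for any sieve R on an object c of C and any arrow t with codomain c, if F(t) belongs to the sieve generated by F(R), then there exists a J-covering sieve U on dom(t) such that t ∘ u ∈ R for all u ∈ U. -/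
open CategoryTheory

universe v₁ v₂ u₁ u₂

namespace Stmt9

variable {C : Type u₁} {D : Type u₂} [Category.{v₁} C] [Category.{v₂} D]

/-- The sieve on `x` of arrows `f` such that `F(f) ≫ g` comes from an arrow of `C`. -/
def liftSieve (F : C ⥤ D) {x y : C} (g : F.obj x ⟶ F.obj y) : Sieve x where
  arrows _ f := ∃ g' : _ ⟶ y, F.map f ≫ g = F.map g'
  downward_closed := by
    rintro x' x'' f ⟨g', hg'⟩ h
    exact ⟨h ≫ g', by simp only [Functor.map_comp, Category.assoc, hg']⟩

/-- The sieve of arrows equalizing two parallel arrows `h, k`. -/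
def equalizingSieve {x y : C} (h k : x ⟶ y) : Sieve x where
  arrows _ f := f ≫ h = f ≫ k
  downward_closed := by
    intro x' x'' f hf g
    simp only [Category.assoc, hf]

/-- `F` is `J`-full: every arrow `g : F(x) ⟶ F(y)` locally (on a `J`-covering family)
coincides with arrows coming from `C`. -/
def JFull (F : C ⥤ D) (J : GrothendieckTopology C) : Prop :=
  ∀ {x y : C} (g : F.obj x ⟶ F.obj y), liftSieve F g ∈ J x

/-- `F` is `J`-faithful: if `F(h) = F(k)` then `h` and `k` are `J`-locally equal. -/
def JFaithful (F : C ⥤ D) (J : GrothendieckTopology C) : Prop :=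
  ∀ {x y : C} (h k : x ⟶ y), F.map h = F.map k → equalizingSieve h k ∈ J x

/-- Lemma 5.25(i): if `F : C ⥤ D` is `J`-full and `J`-faithful, `R` is a sieve on `c` and `t`
an arrow with codomain `c` such that `F(t)` belongs to the sieve generated by `F(R)`, then
there is a `J`-covering sieve `U` on the domain of `t` with `t ∘ u ∈ R` for all `u ∈ U`. -/
theorem local_factorization (F : C ⥤ D) (J : GrothendieckTopology C)
    (hfull : JFull F J) (hfaithful : JFaithful F J)
    {c a : C} (R : Sieve c) (t : a ⟶ c)
    (ht : (Sieve.functorPushforward F R).arrows (F.map t)) :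
    ∃ U ∈ J a, ∀ ⦃a' : C⦄ (u : a' ⟶ a), U.arrows u → R.arrows (u ≫ t) := by
  obtain ⟨Z, g, h, hg, heq⟩ := ht
  refine ⟨R.pullback t, ?_, fun a' u hu => hu⟩
  apply J.transitive (hfull h)
  rintro a' f ⟨g', hg'⟩
  have hF : F.map (f ≫ t) = F.map (g' ≫ g) := by
    simp only [Functor.map_comp, heq, ← Category.assoc, hg']
  apply J.superset_covering _ (hfaithful _ _ hF)
  intro a'' e he
  have : (e ≫ f) ≫ t = e ≫ g' ≫ g := by simpa [Category.assoc] using (show e ≫ f ≫ t = e ≫ g' ≫ g from he)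
  simp only [Sieve.pullback_apply, Category.assoc, this]
  exact R.downward_closed (R.downward_closed hg g') e

end Stmt9
end

section
/- Let F : C ⟶ D be a functor and J a Grothendieck topology on C. Then the collection of sieves J^F on D, defined by: T ∈ J^F(d) iff for every object c of C and every arrow ξ : F(c) ⟶ d there is a J-covering sieve R on c with F(R) ⊆ ξ*(T), is a Grothendieck topology on D, and the functor F : (C,J) ⟶ (D,J^F) is J^F-dense and has the covering-lifting property. -/
open CategoryTheory

universe v₁ v₂ u₁ u₂

namespace Stmt11

variable {C : Type u₁} {D : Type u₂} [Category.{v₁} C] [Category.{v₂} D]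

/-- A sieve `T` on `d : D` satisfies the defining condition of the topology coinduced by `J`
along `F` if for every object `c` of `C` and arrow `ξ : F(c) ⟶ d` there is a `J`-covering
sieve `R` on `c` with `F(R) ⊆ ξ*(T)`. -/
def CoinducedCovers (F : C ⥤ D) (J : GrothendieckTopology C) {d : D} (T : Sieve d) : Prop :=
  ∀ (c : C) (ξ : F.obj c ⟶ d),
    ∃ R ∈ J c, ∀ ⦃c' : C⦄ (f : c' ⟶ c), R.arrows f → T.arrows (F.map f ≫ ξ)

/-- `F` has the covering-lifting property with respect to `(J, K)`. -/
def HasCoverLifting (F : C ⥤ D) (J : GrothendieckTopology C) (K : GrothendieckTopology D) :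
    Prop :=
  ∀ ⦃c : C⦄ (S : Sieve (F.obj c)), S ∈ K (F.obj c) →
    ∃ R ∈ J c, ∀ ⦃d : C⦄ (f : d ⟶ c), R.arrows f → S.arrows (F.map f)

/-- The coinduced topology. -/
def coinducedTopology (F : C ⥤ D) (J : GrothendieckTopology C) : GrothendieckTopology D where
  sieves d T := CoinducedCovers F J T
  top_mem' d c ξ := ⟨⊤, J.top_mem c, fun _ _ _ => trivial⟩
  pullback_stable' d d' T g hT c ξ := by
    obtain ⟨R, hR, hsub⟩ := hT c (ξ ≫ g)
    exact ⟨R, hR, fun c' f hf => by simpa [Sieve.pullback_apply, Category.assoc] using hsub f hf⟩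
  transitive' d T hT S hS c ξ := by
    obtain ⟨R, hR, hsub⟩ := hT c ξ
    choose R' hR' hsub' using fun (c' : C) (f : c' ⟶ c) (hf : R.arrows f) =>
      hS (hsub f hf) c' (𝟙 _)
    refine ⟨Sieve.bind R.arrows (fun c' f hf => R' c' f hf), J.bind_covering hR hR', ?_⟩
    rintro c'' h ⟨c', g, f, hf, hg, rfl⟩
    have := hsub' c' f hf g hg
    simp only [Sieve.pullback_apply, Category.id_comp] at this
    simpa [Category.assoc] using this
  
/-- Proposition 5.26 (first part): for any functor `F : C ⥤ D` and any Grothendieck topology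
`J` on `C`, the collection of sieves `J^F` given by the `CoinducedCovers` condition is a
Grothendieck topology on `D`, and `F : (C, J) ⟶ (D, J^F)` is `J^F`-dense and has the
covering-lifting property. -/
theorem coinduced_is_topology (F : C ⥤ D) (J : GrothendieckTopology C) :
    ∃ K : GrothendieckTopology D,
      (∀ (d : D) (T : Sieve d), T ∈ K d ↔ CoinducedCovers F J T) ∧
      F.IsCoverDense K ∧ HasCoverLifting F J K := by
  refine ⟨coinducedTopology F J, fun d T => Iff.rfl, ⟨fun U c ξ => ?_⟩, fun c S hS => ?_⟩
  · exact ⟨⊤, J.top_mem c, fun c' f _ => ⟨⟨c', 𝟙 _, F.map f ≫ ξ, by simp⟩⟩⟩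
  · obtain ⟨R, hR, hsub⟩ := hS c (𝟙 _)
    exact ⟨R, hR, fun d f hf => by simpa using hsub f hf⟩

end Stmt11
end

section
/- Let F : (C, J) ⟶ (D, K) be a functor that is K-dense and has the covering-lifting property, and is cover-preserving. Then K is determined by J via: a sieve T on an object d of D is K-covering if and only if for every object c of C and every arrow ξ : F(c) ⟶ d there exists a J-covering sieve R on c such that F(R) ⊆ ξ*(T). -/
open CategoryTheory

universe v₁ v₂ u₁ u₂

namespace Stmt12

variable {C : Type u₁} {D : Type u₂} [Category.{v₁} C] [Category.{v₂} D]

/-- A sieve `T` on `d : D` satisfies the coinduced-covering condition: for every object `c` of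
`C` and every arrow `ξ : F(c) ⟶ d` there is a `J`-covering sieve `R` on `c` with
`F(R) ⊆ ξ*(T)`. -/
def CoinducedCovers (F : C ⥤ D) (J : GrothendieckTopology C) {d : D} (T : Sieve d) : Prop :=
  ∀ (c : C) (ξ : F.obj c ⟶ d),
    ∃ R ∈ J c, ∀ ⦃c' : C⦄ (f : c' ⟶ c), R.arrows f → T.arrows (F.map f ≫ ξ)

/-- `F` has the covering-lifting property with respect to `(J, K)`. -/
def HasCoverLifting (F : C ⥤ D) (J : GrothendieckTopology C) (K : GrothendieckTopology D) :
    Prop :=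
  ∀ ⦃c : C⦄ (S : Sieve (F.obj c)), S ∈ K (F.obj c) →
    ∃ R ∈ J c, ∀ ⦃d : C⦄ (f : d ⟶ c), R.arrows f → S.arrows (F.map f)

/-- Proposition 5.24: if `F : (C, J) ⟶ (D, K)` is cover-preserving, `K`-dense and has the
covering-lifting property, then `K` is determined by `J`: a sieve `T` on `d` is `K`-covering
if and only if for every `c` and every `ξ : F(c) ⟶ d` there is a `J`-covering sieve `R` on `c`
with `F(R) ⊆ ξ*(T)` (i.e. `K` is the topology coinduced by `J` along `F`). -/
theorem topology_determined_by_dense_coverLifting (F : C ⥤ D)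
    (J : GrothendieckTopology C) (K : GrothendieckTopology D)
    (hcp : CoverPreserving J K F) (hdense : F.IsCoverDense K)
    (hlift : HasCoverLifting F J K) :
    ∀ (d : D) (T : Sieve d), T ∈ K d ↔ CoinducedCovers F J T := by
  intro d T
  constructor
  · intro hT c ξ
    exact hlift (T.pullback ξ) (K.pullback_stable ξ hT)
  · intro hT
    apply K.transitive (hdense.is_cover d)
    intro d' g hg
    obtain ⟨⟨c, lift, map, fac⟩⟩ := hg
    obtain ⟨R, hR, hFR⟩ := hT c map
    have h1 : Sieve.functorPushforward F R ∈ K (F.obj c) := hcp.cover_preserve hR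
    apply K.superset_covering _ (K.pullback_stable lift h1)
    intro e h hh
    obtain ⟨c', f, l, hf, hcomp⟩ := hh
    have : T.arrows ((h ≫ lift) ≫ map) := by
      rw [hcomp, Category.assoc]
      exact T.downward_closed (hFR f hf) l
    simpa [Sieve.pullback_apply, ← fac] using this

end Stmt12
end

section
/- Let F : (C, J) ⟶ (D, K) be a morphism of sites between small-generated sites. Then the induced geometric morphism Sh(F) : Sh(D, K) ⟶ Sh(C, J) is a surjection (its inverse image functor is faithful) if and only if F is cover-reflecting, i.e., any sieve in C whose image under F generates a K-covering sieve is itself J-covering. -/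
open CategoryTheory Limits

universe u

namespace Stmt13

variable {C : Type u} {D : Type u} [SmallCategory C] [SmallCategory D]

/-- Given a finite diagram `X` in `C` and a cone `c` over `X ⋙ F` in `D`, the sieve on the
vertex of `c` consisting of those arrows `g` such that the cone restricted along `g` factors
through the `F`-image of a cone over `X`. -/
def coneFactorSieve (F : C ⥤ D) {I : Type} [SmallCategory I] (X : I ⥤ C)
    (c : Cone (X ⋙ F)) : Sieve c.pt where
  arrows _ g := ∃ (z : Cone X) (w : _ ⟶ F.obj z.pt),
    ∀ i : I, w ≫ F.map (z.π.app i) = g ≫ c.π.app i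
  downward_closed := by
    rintro d' e g ⟨z, w, hw⟩ h
    exact ⟨z, h ≫ w, fun i => by simp only [Category.assoc, hw i]⟩

/-- A functor `F : C ⥤ D` is covering-flat with respect to `K`. -/
def CoveringFlat (F : C ⥤ D) (K : GrothendieckTopology D) : Prop :=
  ∀ (I : Type) [SmallCategory I] [FinCategory I] (X : I ⥤ C) (c : Cone (X ⋙ F)),
    coneFactorSieve F X c ∈ K c.pt

open Opposite

section LanElements

variable (F : C ⥤ D)

/-- The element of the left Kan extension of `X` along `F.op` at `d` determined by
`g : d ⟶ F.obj c` and `ξ : X.obj (op c)`. -/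
noncomputable def lanE (X : Cᵒᵖ ⥤ Type u) {c : C} {d : D} (g : d ⟶ F.obj c)
    (ξ : X.obj (op c)) : (F.op.lan.obj X).obj (op d) :=
  (F.op.lan.obj X).map g.op ((F.op.lanUnit.app X).app (op c) ξ)

lemma lanE_map (X : Cᵒᵖ ⥤ Type u) {c : C} {d d' : D} (h : d' ⟶ d) (g : d ⟶ F.obj c)
    (ξ : X.obj (op c)) :
    (F.op.lan.obj X).map h.op (lanE F X g ξ) = lanE F X (h ≫ g) ξ := by
  dsimp [lanE]
  rw [← FunctorToTypes.map_comp_apply]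

lemma lanE_factor (X : Cᵒᵖ ⥤ Type u) {c c' : C} {d : D} (w : d ⟶ F.obj c') (u : c' ⟶ c)
    (ξ : X.obj (op c)) :
    lanE F X (w ≫ F.map u) ξ = lanE F X w (X.map u.op ξ) := by
  dsimp [lanE]
  have h := ConcreteCategory.congr_hom ((F.op.lanUnit.app X).naturality u.op) ξ
  dsimp at h
  rw [h, ← FunctorToTypes.map_comp_apply]

lemma lanE_colimit (X : Cᵒᵖ ⥤ Type u) {c : C} {d : D} (g : d ⟶ F.obj c) (ξ : X.obj (op c)) :
    (F.op.leftKanExtensionObjIsoColimit X (op d)).hom (lanE F X g ξ) =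
      colimit.ι (CostructuredArrow.proj F.op (op d) ⋙ X)
        (CostructuredArrow.mk (Y := op c) g.op) ξ := by
  have h := ConcreteCategory.congr_hom (F.op.ι_leftKanExtensionObjIsoColimit_hom X (op d)
    (CostructuredArrow.mk (Y := op c) g.op)) ξ
  dsimp at h ⊢
  exact h

end LanElements


section UnitDescription

variable (F : C ⥤ D) (J : GrothendieckTopology C) (K : GrothendieckTopology D)
variable [Functor.IsContinuous.{u} F J K]

lemma unit_app_apply (X : Sheaf J (Type u)) (c : Cᵒᵖ) (x : X.val.obj c) :
    ((Functor.sheafPullbackConstruction.sheafAdjunctionContinuous F (Type u) J K).unit.app X).hom.app c x =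
      (toSheafify K (F.op.lan.obj X.val)).app (F.op.obj c)
        ((F.op.lanUnit.app X.val).app c x) := by
  have h := Adjunction.map_restrictFullyFaithful_unit_app
    ((F.op.lanAdjunction (Type u)).comp (sheafificationAdjunction K (Type u)))
    (fullyFaithfulSheafToPresheaf J (Type u)) (Functor.FullyFaithful.id _)
    (L := Functor.sheafPullbackConstruction.sheafPullback F (Type u) J K) (R := F.sheafPushforwardContinuous (Type u) J K)
    (Iso.refl _) (Iso.refl _) (X := X)
  have h2 : ((Functor.sheafPullbackConstruction.sheafAdjunctionContinuous F (Type u) J K).unit.app X).hom =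
      ((F.op.lanAdjunction (Type u)).comp (sheafificationAdjunction K (Type u))).unit.app X.val := by
    dsimp only [Functor.sheafPullbackConstruction.sheafAdjunctionContinuous]
    exact h.trans (by ext; rfl)
  rw [h2]
  rw [Adjunction.comp_unit_app]
  simp [Functor.lanAdjunction_unit]
  rfl

end UnitDescription


section ZigZag

variable (F : C ⥤ D) (K : GrothendieckTopology D) (X : Cᵒᵖ ⥤ Type u)

/-- The sieve of arrows on which two "Kan extension elements" are related through a common
refinement. -/
def relSieve {d : D} {c₁ c₂ : C} (f₁ : d ⟶ F.obj c₁) (f₂ : d ⟶ F.obj c₂)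
    (ξ₁ : X.obj (op c₁)) (ξ₂ : X.obj (op c₂)) : Sieve d where
  arrows d' h := ∃ (c₀ : C) (w : d' ⟶ F.obj c₀) (u₁ : c₀ ⟶ c₁) (u₂ : c₀ ⟶ c₂),
    w ≫ F.map u₁ = h ≫ f₁ ∧ w ≫ F.map u₂ = h ≫ f₂ ∧ X.map u₁.op ξ₁ = X.map u₂.op ξ₂
  downward_closed := by
    rintro d' d'' h ⟨c₀, w, u₁, u₂, h₁, h₂, h₃⟩ e
    exact ⟨c₀, e ≫ w, u₁, u₂, by rw [Category.assoc, h₁, Category.assoc],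
      by rw [Category.assoc, h₂, Category.assoc], h₃⟩

variable {F K}

/-- A cone over `parallelPair u₁ u₂ ⋙ F`. -/
@[simps]
def ppCone {c₀ c₁ : C} (u₁ u₂ : c₀ ⟶ c₁) {d : D} (w : d ⟶ F.obj c₀) (v : d ⟶ F.obj c₁)
    (h₁ : w ≫ F.map u₁ = v) (h₂ : w ≫ F.map u₂ = v) :
    Cone (parallelPair u₁ u₂ ⋙ F) where
  pt := d
  π := {
    app := fun j => WalkingParallelPair.casesOn j w v
    naturality := by
      rintro _ _ (_|_|_) <;>
        simp [h₁, h₂] }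

/-- A cone over `cospan u₁ u₂ ⋙ F`. -/
@[simps]
def csCone {c₀ c₀' c₂ : C} (u : c₀ ⟶ c₂) (u' : c₀' ⟶ c₂) {d : D} (w : d ⟶ F.obj c₀)
    (w' : d ⟶ F.obj c₀') (v : d ⟶ F.obj c₂)
    (h₁ : w ≫ F.map u = v) (h₂ : w' ≫ F.map u' = v) :
    Cone (cospan u u' ⋙ F) where
  pt := d
  π := {
    app := fun j => Option.casesOn j v fun j' => WalkingPair.casesOn j' w w'
    naturality := by
      rintro _ _ (_|_|_) <;> simp [h₁, h₂] }

/-- The "step" case of the zigzag lemma. -/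
lemma relSieve_mem_step (hflat : CoveringFlat F K) {d : D} {c₁ c₂ : C}
    (f₁ : d ⟶ F.obj c₁) (f₂ : d ⟶ F.obj c₂) (u : c₂ ⟶ c₁) (hf : f₁ = f₂ ≫ F.map u)
    (ξ₁ : X.obj (op c₁)) (ξ₂ : X.obj (op c₂)) (hξ : ξ₂ = X.map u.op ξ₁) :
    relSieve F X f₁ f₂ ξ₁ ξ₂ ∈ K d := by
  subst hf hξ
  refine K.superset_covering ?_
    (hflat WalkingParallelPair (parallelPair (𝟙 c₂) (𝟙 c₂)) (ppCone _ _ f₂ f₂ (by simp) (by simp)))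
  rintro d' h ⟨z, w, hw⟩
  have h0 : w ≫ F.map (z.π.app WalkingParallelPair.zero) = h ≫ f₂ := hw WalkingParallelPair.zero
  refine ⟨z.pt, w, z.π.app .zero ≫ u, z.π.app .zero, ?_, h0, ?_⟩
  · rw [F.map_comp, ← Category.assoc, h0, Category.assoc]
  · rw [op_comp, FunctorToTypes.map_comp_apply]

lemma relSieve_mem_refl (hflat : CoveringFlat F K) {d : D} {c₁ : C}
    (f₁ : d ⟶ F.obj c₁) (ξ₁ : X.obj (op c₁)) :
    relSieve F X f₁ f₁ ξ₁ ξ₁ ∈ K d := by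
  refine K.superset_covering ?_
    (hflat WalkingParallelPair (parallelPair (𝟙 c₁) (𝟙 c₁)) (ppCone _ _ f₁ f₁ (by simp) (by simp)))
  rintro d' h ⟨z, w, hw⟩
  have h0 : w ≫ F.map (z.π.app WalkingParallelPair.zero) = h ≫ f₁ := hw WalkingParallelPair.zero
  exact ⟨z.pt, w, z.π.app .zero, z.π.app .zero, h0, h0, rfl⟩

lemma relSieve_mem_symm {d : D} {c₁ c₂ : C}
    {f₁ : d ⟶ F.obj c₁} {f₂ : d ⟶ F.obj c₂} {ξ₁ : X.obj (op c₁)} {ξ₂ : X.obj (op c₂)}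
    (h : relSieve F X f₁ f₂ ξ₁ ξ₂ ∈ K d) :
    relSieve F X f₂ f₁ ξ₂ ξ₁ ∈ K d := by
  refine K.superset_covering ?_ h
  rintro d' g ⟨c₀, w, u₁, u₂, h₁, h₂, h₃⟩
  exact ⟨c₀, w, u₂, u₁, h₂, h₁, h₃.symm⟩

lemma relSieve_mem_trans (hflat : CoveringFlat F K) {d : D} {c₁ c₂ c₃ : C}
    {f₁ : d ⟶ F.obj c₁} {f₂ : d ⟶ F.obj c₂} {f₃ : d ⟶ F.obj c₃}
    {ξ₁ : X.obj (op c₁)} {ξ₂ : X.obj (op c₂)} {ξ₃ : X.obj (op c₃)}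
    (h12 : relSieve F X f₁ f₂ ξ₁ ξ₂ ∈ K d) (h23 : relSieve F X f₂ f₃ ξ₂ ξ₃ ∈ K d) :
    relSieve F X f₁ f₃ ξ₁ ξ₃ ∈ K d := by
  refine K.transitive (K.intersection_covering h12 h23) _ ?_
  rintro d' h ⟨⟨c₀, w, u₁, u₂, hw₁, hw₂, hx⟩, ⟨c₀', w', u₂', u₃, hw₁', hw₂', hx'⟩⟩
  refine K.superset_covering ?_
    (hflat WalkingCospan (cospan u₂ u₂') (csCone u₂ u₂' w w' (h ≫ f₂) hw₂ hw₁'))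
  rintro d'' h' ⟨z, w'', hw''⟩
  have ha : w'' ≫ F.map (z.π.app WalkingCospan.left) = h' ≫ w := hw'' WalkingCospan.left
  have hb : w'' ≫ F.map (z.π.app WalkingCospan.right) = h' ≫ w' := hw'' WalkingCospan.right
  have hnat : z.π.app WalkingCospan.left ≫ u₂ = z.π.app WalkingCospan.right ≫ u₂' := by
    have l1 := z.w WalkingCospan.Hom.inl
    have l2 := z.w WalkingCospan.Hom.inr
    dsimp at l1 l2
    exact l1.trans l2.symm
  refine ⟨z.pt, w'', z.π.app WalkingCospan.left ≫ u₁, z.π.app WalkingCospan.right ≫ u₃,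
    ?_, ?_, ?_⟩
  · erw [F.map_comp, ← Category.assoc, ha, Category.assoc, hw₁, ← Category.assoc, Category.assoc]
  · erw [F.map_comp, ← Category.assoc, hb, Category.assoc, hw₂', ← Category.assoc, Category.assoc]
  · erw [op_comp, op_comp, FunctorToTypes.map_comp_apply, FunctorToTypes.map_comp_apply, hx, ← hx',
      ← FunctorToTypes.map_comp_apply, ← FunctorToTypes.map_comp_apply, ← op_comp, ← op_comp, hnat]
    rfl

lemma relSieve_mem_of_eqvGen (hflat : CoveringFlat F K) {d : D}
    (p q : Σ j : CostructuredArrow F.op (op d), X.obj j.left)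
    (h : Relation.EqvGen ((CostructuredArrow.proj F.op (op d) ⋙ X).ColimitTypeRel) p q) :
    relSieve F X p.1.hom.unop q.1.hom.unop p.2 q.2 ∈ K d := by
  induction h with
  | rel p q hr =>
      obtain ⟨f, hf⟩ := hr
      refine relSieve_mem_step X hflat _ _ f.left.unop ?_ _ _ ?_
      · have hw := CostructuredArrow.w f
        have := congr_arg Quiver.Hom.unop hw
        simpa using this.symm
      · exact hf
  | refl p => exact relSieve_mem_refl X hflat _ _
  | symm p q _ ih => exact relSieve_mem_symm X ih
  | trans p q r _ _ ih₁ ih₂ => exact relSieve_mem_trans X hflat ih₁ ih₂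

lemma pullback_pushforward_equalizer_mem (hflat : CoveringFlat F K) {c : C} {d : D}
    (g : d ⟶ F.obj c) (x y : X.obj (op c)) (hrel : relSieve F X g g x y ∈ K d) :
    ((Presheaf.equalizerSieve (F := X) x y).functorPushforward F).pullback g ∈ K d := by
  refine K.transitive hrel _ ?_
  rintro d'' h ⟨c₀, w, u₁, u₂, hw₁, hw₂, hx⟩
  refine K.superset_covering ?_
    (hflat WalkingParallelPair (parallelPair u₁ u₂) (ppCone u₁ u₂ w (h ≫ g) hw₁ hw₂))
  rintro e h' ⟨z, w', hw'⟩
  have ha : w' ≫ F.map (z.π.app .zero) = h' ≫ w := hw' .zero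
  have hb : w' ≫ F.map (z.π.app .one) = h' ≫ h ≫ g := hw' .one
  have l1 : z.π.app WalkingParallelPair.zero ≫ u₁ = z.π.app WalkingParallelPair.one := by
    simpa using z.w WalkingParallelPairHom.left
  have l2 : z.π.app WalkingParallelPair.zero ≫ u₂ = z.π.app WalkingParallelPair.one := by
    simpa using z.w WalkingParallelPairHom.right
  refine ⟨z.pt, z.π.app WalkingParallelPair.one, w', ?_, ?_⟩
  · show X.map (z.π.app WalkingParallelPair.one).op x = X.map (z.π.app WalkingParallelPair.one).op y
    calc X.map (z.π.app WalkingParallelPair.one).op x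
        = X.map (z.π.app WalkingParallelPair.zero ≫ u₁).op x := by rw [l1]
      _ = X.map (z.π.app WalkingParallelPair.zero).op (X.map u₁.op x) := by
          rw [op_comp, FunctorToTypes.map_comp_apply]
      _ = X.map (z.π.app WalkingParallelPair.zero).op (X.map u₂.op y) := by rw [hx]
      _ = X.map (z.π.app WalkingParallelPair.zero ≫ u₂).op y := by
          rw [op_comp, FunctorToTypes.map_comp_apply]
      _ = X.map (z.π.app WalkingParallelPair.one).op y := by rw [l2]
  · rw [Category.assoc, ← hb]

end ZigZag

section Main

variable (F : C ⥤ D) (J : GrothendieckTopology C) (K : GrothendieckTopology D)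
variable [Functor.IsContinuous.{u} F J K]

lemma backward_inj (hflat : CoveringFlat F K)
    (hrefl : ∀ (c : C) (S : Sieve c), Sieve.functorPushforward F S ∈ K (F.obj c) → S ∈ J c)
    (X : Sheaf J (Type u)) (c : Cᵒᵖ) :
    Function.Injective (((Functor.sheafPullbackConstruction.sheafAdjunctionContinuous F (Type u) J K).unit.app X).hom.app c) := by
  intro x y hxy
  rw [unit_app_apply, unit_app_apply] at hxy
  have h1 : Presheaf.equalizerSieve (F := F.op.lan.obj X.val) (X := op (F.obj c.unop)) ((F.op.lanUnit.app X.val).app c x)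
      ((F.op.lanUnit.app X.val).app c y) ∈ K (F.obj c.unop) :=
    Presheaf.equalizerSieve_mem (J := K) (φ := toSheafify K (F.op.lan.obj X.val)) _ _ hxy
  have h2 : Sieve.functorPushforward F (Presheaf.equalizerSieve (F := X.val) x y) ∈
      K (F.obj c.unop) := by
    refine K.transitive h1 _ ?_
    rintro d g hg
    have hg' : lanE F X.val g x = lanE F X.val g y := hg
    have hcol : colimit.ι (CostructuredArrow.proj F.op (op d) ⋙ X.val)
        (CostructuredArrow.mk (Y := op c.unop) g.op) x =
        colimit.ι (CostructuredArrow.proj F.op (op d) ⋙ X.val)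
        (CostructuredArrow.mk (Y := op c.unop) g.op) y := by
      rw [← lanE_colimit, ← lanE_colimit, hg']
    have heqv := Types.colimit_eq hcol
    exact pullback_pushforward_equalizer_mem X.val hflat g x y
      (relSieve_mem_of_eqvGen X.val hflat
        ⟨CostructuredArrow.mk (Y := op c.unop) g.op, x⟩
        ⟨CostructuredArrow.mk (Y := op c.unop) g.op, y⟩ heqv)
  have h3 : Presheaf.equalizerSieve (F := X.val) x y ∈ J c.unop :=
    hrefl c.unop (Presheaf.equalizerSieve (F := X.val) x y) h2
  exact (((isSheaf_iff_isSheaf_of_type J _).1 X.cond _ h3).isSeparatedFor).ext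
    (fun Y f hf => hf)

lemma forward_mem [hF : (Functor.sheafPullbackConstruction.sheafPullback F (Type u) J K).Faithful] (c : C) (S : Sieve c)
    (hS : Sieve.functorPushforward F S ∈ K (F.obj c)) : S ∈ J c := by
  set Xs : Sheaf J (Type u) :=
    ⟨(Functor.closedSieves J).toFunctor, (isSheaf_iff_isSheaf_of_type J _).2 (classifier_isSheaf J)⟩ with hXs
  set adj₀ := Functor.sheafPullbackConstruction.sheafAdjunctionContinuous F (Type u) J K with hadj
  haveI hm : Mono (adj₀.unit.app Xs) := inferInstance
  haveI : (sheafToPresheaf J (Type u)).PreservesMonomorphisms :=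
    Functor.preservesMonomorphisms_of_adjunction (sheafificationAdjunction J (Type u))
  haveI hm2 : Mono ((adj₀.unit.app Xs).hom) := by
    change Mono ((sheafToPresheaf J (Type u)).map (adj₀.unit.app Xs))
    infer_instance
  have hinj : Function.Injective ((adj₀.unit.app Xs).hom.app (op c)) :=
    (mono_iff_injective _).1 inferInstance
  set x : Xs.val.obj (op c) := ⟨J.close S, J.close_isClosed S⟩ with hx
  set y : Xs.val.obj (op c) := ⟨J.close ⊤, J.close_isClosed ⊤⟩ with hy
  have key : (adj₀.unit.app Xs).hom.app (op c) x = (adj₀.unit.app Xs).hom.app (op c) y := by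
    rw [hadj, unit_app_apply, unit_app_apply]
    refine (((isSheaf_iff_isSheaf_of_type K _).1
      ((presheafToSheaf K (Type u)).obj (F.op.lan.obj Xs.val)).cond _ hS).isSeparatedFor).ext ?_
    rintro d f ⟨c', u, w, hu, rfl⟩
    have key2 : ∀ t : Xs.val.obj (op c),
        ((presheafToSheaf K (Type u)).obj (F.op.lan.obj Xs.val)).val.map (w ≫ F.map u).op
          ((toSheafify K (F.op.lan.obj Xs.val)).app (F.op.obj (op c))
            ((F.op.lanUnit.app Xs.val).app (op c) t)) =
        (toSheafify K (F.op.lan.obj Xs.val)).app (op d)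
          (lanE F Xs.val w (Xs.val.map u.op t)) := fun t =>
      (NatTrans.naturality_apply (toSheafify K (F.op.lan.obj Xs.val)) (w ≫ F.map u).op
        ((F.op.lanUnit.app Xs.val).app (op c) t)).symm.trans
        (congr_arg ((toSheafify K (F.op.lan.obj Xs.val)).app (op d))
          (lanE_factor F Xs.val w u t))
    have hval : Xs.val.map u.op x = Xs.val.map u.op y := by
      apply Subtype.ext
      show (J.close S).pullback u = (J.close ⊤).pullback u
      rw [← J.pullback_close, ← J.pullback_close, Sieve.pullback_eq_top_of_mem S hu,
        Sieve.pullback_top]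
    exact (key2 x).trans (((congr_arg (fun t => (toSheafify K (F.op.lan.obj Xs.val)).app (op d)
      (lanE F Xs.val w t)) hval)).trans (key2 y).symm)
  have hxy : x = y := hinj key
  have : J.close S = J.close ⊤ := congr_arg Subtype.val hxy
  rw [show (J.close (⊤ : Sieve c)) = ⊤ from eq_top_iff.2 (J.le_close ⊤)] at this
  exact (J.close_eq_top_iff_mem S).1 this


/-- Theorem 6.3(a) -/
theorem surjection_iff_coverReflecting (J : GrothendieckTopology C)
    (K : GrothendieckTopology D) (F : C ⥤ D)
    (hflat : CoveringFlat F K) (hcp : CoverPreserving J K F)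
    [Functor.IsContinuous.{u} F J K] :
    ∀ (pb : Sheaf J (Type u) ⥤ Sheaf K (Type u))
      (_ : pb ⊣ F.sheafPushforwardContinuous (Type u) J K),
      (pb.Faithful ↔
        ∀ (c : C) (S : Sieve c), Sieve.functorPushforward F S ∈ K (F.obj c) → S ∈ J c) := by
  intro pb adj
  constructor
  · intro hpb c S hS
    haveI : pb.Faithful := hpb
    haveI : (Functor.sheafPullbackConstruction.sheafPullback F (Type u) J K).Faithful :=
      Functor.Faithful.of_iso
        (Adjunction.leftAdjointUniq adj (Functor.sheafPullbackConstruction.sheafAdjunctionContinuous F (Type u) J K))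
    exact forward_mem F J K c S hS
  · intro hrefl
    haveI : ∀ X : Sheaf J (Type u),
        Mono ((Functor.sheafPullbackConstruction.sheafAdjunctionContinuous F (Type u) J K).unit.app X) := by
      intro X
      haveI : Mono ((Functor.sheafPullbackConstruction.sheafAdjunctionContinuous F (Type u) J K).unit.app X).hom := by
        haveI : ∀ k, Mono (((Functor.sheafPullbackConstruction.sheafAdjunctionContinuous F (Type u) J K).unit.app X).hom.app k) := by
          intro k
          rw [CategoryTheory.mono_iff_injective]
          exact backward_inj F J K hflat hrefl X k
        apply NatTrans.mono_of_mono_app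
      exact Sheaf.Hom.mono_of_presheaf_mono J (Type u) _
    haveI : (Functor.sheafPullbackConstruction.sheafPullback F (Type u) J K).Faithful :=
      (Functor.sheafPullbackConstruction.sheafAdjunctionContinuous F (Type u) J K).faithful_L_of_mono_unit_app
    exact Functor.Faithful.of_iso
      (Adjunction.leftAdjointUniq (Functor.sheafPullbackConstruction.sheafAdjunctionContinuous F (Type u) J K) adj)

end Main

end Stmt13
end

section
/- Let f : F ⟶ E be a geometric morphism between Grothendieck toposes whose inverse image f* is faithful and whose essential image (the class of objects isomorphic to f*(A) for some A) is closed under subobjects in F. Then f* is full. -/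
open CategoryTheory Limits

universe u

namespace Stmt14

/-- Part of Proposition 6.12 (cf. p. 229 of [Johnstone, Sketches of an Elephant]): if
`f : F ⟶ E` is a geometric morphism between Grothendieck toposes (presented as sheaf toposes,
with inverse image `L ⊣ R` preserving finite limits) such that `L = f*` is faithful and its
essential image is closed under subobjects (every mono `B ⟶ L(A)` is, compatibly, the image
under `L` of a mono into `A`), then `L = f*` is full. -/
theorem inverseImage_full_of_faithful_of_closed_under_subobjects
    {C D : Type u} [SmallCategory C] [SmallCategory D]
    (J : GrothendieckTopology C) (K : GrothendieckTopology D)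
    (L : Sheaf J (Type u) ⥤ Sheaf K (Type u)) (R : Sheaf K (Type u) ⥤ Sheaf J (Type u))
    (adj : L ⊣ R) [PreservesFiniteLimits L] [L.Faithful]
    (hsub : ∀ (A : Sheaf J (Type u)) (B : Sheaf K (Type u)) (m : B ⟶ L.obj A), Mono m →
      ∃ (A' : Sheaf J (Type u)) (m' : A' ⟶ A) (_ : Mono m') (e : B ≅ L.obj A'),
        e.hom ≫ L.map m' = m) :
    L.Full := by
  constructor
  intro A B g
  -- the "graph" of `g` as a subobject of `L (A ⨯ B)`
  haveI : IsIso (prodComparison L A B) := by infer_instance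
  set m : L.obj A ⟶ L.obj (A ⨯ B) :=
    prod.lift (𝟙 (L.obj A)) g ≫ inv (prodComparison L A B) with hm
  haveI : Mono (prod.lift (𝟙 (L.obj A)) g) :=
    mono_of_mono_fac (prod.lift_fst _ _)
  haveI hmono : Mono m := mono_comp _ _
  obtain ⟨A', m', hm', e, he⟩ := hsub (A ⨯ B) (L.obj A) m hmono
  -- `L m' = e.inv ≫ m`
  have hLm' : L.map m' = e.inv ≫ m := by
    rw [← he, Iso.inv_hom_id_assoc]
  set k : A' ⟶ A := m' ≫ prod.fst with hk
  have hfst : inv (prodComparison L A B) ≫ L.map prod.fst = prod.fst := by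
    rw [IsIso.inv_comp_eq, prodComparison_fst]
  have hsnd : inv (prodComparison L A B) ≫ L.map prod.snd = prod.snd := by
    rw [IsIso.inv_comp_eq, prodComparison_snd]
  have hLk : L.map k = e.inv := by
    rw [hk, L.map_comp, hLm', hm]
    simp only [Category.assoc]
    rw [hfst]
    exact (congrArg (e.inv ≫ ·) (prod.lift_fst _ _)).trans (Category.comp_id _)
  haveI : IsIso (L.map k) := by rw [hLk]; infer_instance
  haveI : Mono k := L.mono_of_mono_map (by rw [hLk]; infer_instance)
  haveI : Epi k := L.epi_of_epi_map (by rw [hLk]; infer_instance)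
  haveI : IsIso k := isIso_of_mono_of_epi k
  refine ⟨inv k ≫ m' ≫ prod.snd, ?_⟩
  have hLsnd : L.map (m' ≫ prod.snd) = e.inv ≫ g := by
    rw [L.map_comp, hLm', hm]
    simp only [Category.assoc]
    rw [hsnd]
    simp
    exact prod.lift_snd _ _
  rw [L.map_comp, L.map_inv, hLsnd]
  simp [hLk]
end Stmt14
end

section
/- Let C be a separating family of objects in a Grothendieck topos E and f : F ⟶ E a geometric morphism. If for every c ∈ C every subobject of f*(c) lies in the essential image of f*, then every subobject of every object of the form f*(A), for A in E, lies in the essential image of f*. -/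
open CategoryTheory Limits Opposite

universe u

namespace Stmt15

instance instSheafTypeHasColimitsOfShapeDiscrete {C : Type u} [SmallCategory C]
    (J : GrothendieckTopology C) (ι : Type u) :
    HasColimitsOfShape (Discrete ι) (Sheaf J (Type u)) :=
  Sheaf.instHasColimitsOfShape (K := Discrete ι) (D := Type u)

/-- The coproduct injections into a coproduct of sheaves of types are jointly locally
surjective: every section of the coproduct locally comes from one of the summands. -/
lemma sigma_jointly_ls {D : Type u} [SmallCategory D] (K : GrothendieckTopology D)
    {ι : Type u} (Y : ι → Sheaf K (Type u)) {U : D} (s : (∐ Y).val.obj (op U)) :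
    ∃ S ∈ K U, ∀ ⦃V : D⦄ (h : V ⟶ U), S.arrows h →
      ∃ (i : ι) (y : (Y i).val.obj (op V)),
        (Sigma.ι Y i).hom.app (op V) y = (∐ Y).val.map h.op s := by
  classical
  let Q : Dᵒᵖ ⥤ Type u := ∐ (fun i => (Y i).val)
  let w : Q ⟶ (∐ Y).val := Sigma.desc (fun i => (Sigma.ι Y i).hom)
  let adj' := sheafificationAdjunction K (Type u)
  let G := presheafToSheaf K (Type u)
  haveI : PreservesColimits G := adj'.leftAdjoint_preservesColimits
  let φ : G.obj Q ⟶ ∐ Y := (adj'.homEquiv Q (∐ Y)).symm w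
  have hφval : toSheafify K Q ≫ φ.hom = w := by
    have := adj'.homEquiv_unit (f := φ)
    have h2 : adj'.homEquiv Q (∐ Y) φ = w := (adj'.homEquiv Q (∐ Y)).apply_symm_apply w
    rw [this] at h2
    simpa [adj', sheafificationAdjunction_unit_app] using h2
  have hcomp : sigmaComparison G (fun i => (Y i).val) ≫ φ =
      Limits.Sigma.map (f := fun i => G.obj ((Y i).val)) (g := Y)
        (fun i => adj'.counit.app (Y i)) := by
    apply Sigma.hom_ext
    intro i
    rw [ι_comp_sigmaComparison_assoc]
    have h1 : G.map (Sigma.ι (fun i => (Y i).val) i) ≫ φ =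
        (adj'.homEquiv _ _).symm (Sigma.ι (fun i => (Y i).val) i ≫ w) :=
      (adj'.homEquiv_naturality_left_symm _ w).symm
    have h2 : Sigma.ι (fun i => (Y i).val) i ≫ w = (Sigma.ι Y i).hom :=
      colimit.ι_desc _ _
    rw [h1, h2]
    have h3 : (Sigma.ι Y i).hom = (sheafToPresheaf K (Type u)).map (Sigma.ι Y i) := rfl
    rw [h3, adj'.homEquiv_counit]
    simpa using adj'.counit.naturality (Sigma.ι Y i)
  haveI : IsIso φ := by
    have : φ = inv (sigmaComparison G (fun i => (Y i).val)) ≫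
        Limits.Sigma.map (f := fun i => G.obj ((Y i).val)) (g := Y)
          (fun i => adj'.counit.app (Y i)) := by
      rw [← hcomp]; simp
    rw [this]
    infer_instance
  haveI : IsIso φ.hom := inferInstanceAs (IsIso ((sheafToPresheaf K (Type u)).map φ))
  haveI : Presheaf.IsLocallySurjective K w := by
    have : Presheaf.IsLocallySurjective K (toSheafify K Q ≫ φ.hom) := inferInstance
    rwa [hφval] at this
  refine ⟨Presheaf.imageSieve w s, Presheaf.imageSieve_mem K w (U := op U) s, ?_⟩
  rintro V h ⟨t, ht⟩
  -- decompose `t`, a section of the presheaf coproduct, into a summand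
  let ev := (evaluation Dᵒᵖ (Type u)).obj (op V)
  obtain ⟨q, hq⟩ : ∃ q, sigmaComparison ev (fun i => (Y i).val) q = t :=
    ((isIso_iff_bijective _).1 inferInstance).2 t
  obtain ⟨⟨i, y⟩, rfl⟩ : ∃ z, (Types.coproductIso (fun i => (Y i).val.obj (op V))).inv z = q :=
    ⟨(Types.coproductIso _).hom q, ConcreteCategory.congr_hom (Types.coproductIso _).hom_inv_id q⟩
  refine ⟨i, y, ?_⟩
  have hinv : (Types.coproductIso (fun i => (Y i).val.obj (op V))).inv ⟨i, y⟩ =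
      Sigma.ι (fun i => (Y i).val.obj (op V)) i y :=
    ConcreteCategory.congr_hom (Types.coproductIso_mk_comp_inv (fun i => (Y i).val.obj (op V)) i) y
  have hι : sigmaComparison ev (fun i => (Y i).val)
        (Sigma.ι (fun i => (Y i).val.obj (op V)) i y) =
      (Sigma.ι (fun i => (Y i).val) i).app (op V) y :=
    ConcreteCategory.congr_hom (ι_comp_sigmaComparison ev (fun i => (Y i).val) i) y
  have hw : w.app (op V) ((Sigma.ι (fun i => (Y i).val) i).app (op V) y) =
      (Sigma.ι Y i).hom.app (op V) y := by
    have : Sigma.ι (fun i => (Y i).val) i ≫ w = (Sigma.ι Y i).hom := colimit.ι_desc _ _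
    exact (ConcreteCategory.congr_hom (congr_app this (op V)) y)
  rw [hinv, hι] at hq
  rw [← hq] at ht
  exact hw.symm.trans ht


/-- Proposition 6.10: let `C` (here: `𝒢`) be a separating set of objects for a Grothendieck
topos `E` (presented as a sheaf topos) and `f : F ⟶ E` a geometric morphism (with inverse
image `L ⊣ R` preserving finite limits).  If for every `c ∈ 𝒢` every subobject of `f*(c)` lies
in the essential image of `f*` (compatibly, i.e. it is the image under `f*` of a subobject of
`c`), then the same holds for every subobject of every object of the form `f*(A)`, `A ∈ E`. -/
theorem subobjects_in_image_of_generators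
    {C D : Type u} [SmallCategory C] [SmallCategory D]
    (J : GrothendieckTopology C) (K : GrothendieckTopology D)
    (L : Sheaf J (Type u) ⥤ Sheaf K (Type u)) (R : Sheaf K (Type u) ⥤ Sheaf J (Type u))
    (adj : L ⊣ R) [PreservesFiniteLimits L]
    (𝒢 : Set (Sheaf J (Type u)))
    (hsep : ∀ e : Sheaf J (Type u), ∃ (ι : Type u) (X : ι → Sheaf J (Type u)),
      (∀ i, X i ∈ 𝒢) ∧ ∃ p : (∐ X) ⟶ e, Epi p)
    (hgen : ∀ c ∈ 𝒢, ∀ (B : Sheaf K (Type u)) (m : B ⟶ L.obj c), Mono m →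
      ∃ (A' : Sheaf J (Type u)) (m' : A' ⟶ c) (_ : Mono m') (e : B ≅ L.obj A'),
        e.hom ≫ L.map m' = m) :
    ∀ (A : Sheaf J (Type u)) (B : Sheaf K (Type u)) (m : B ⟶ L.obj A), Mono m →
      ∃ (A' : Sheaf J (Type u)) (m' : A' ⟶ A) (_ : Mono m') (e : B ≅ L.obj A'),
        e.hom ≫ L.map m' = m := by
  intro A B m hm
  haveI := hm
  obtain ⟨ι, X, hX, p, hp⟩ := hsep A
  haveI := hp
  haveI : PreservesColimits L := adj.leftAdjoint_preservesColimits
  haveI := adj.isLeftAdjoint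
  -- the canonical epimorphism from the coproduct of generators
  let c : (∐ fun i => L.obj (X i)) ⟶ L.obj A := sigmaComparison L X ≫ L.map p
  haveI : Epi (L.map p) := L.map_epi p
  haveI hc : Epi c := epi_comp _ _
  -- pull back `m` along each component
  let f : ∀ i, L.obj (X i) ⟶ L.obj A := fun i => L.map (Sigma.ι X i ≫ p)
  have hic : ∀ i, Sigma.ι (fun i => L.obj (X i)) i ≫ c = f i := by
    intro i
    simp only [c, f, ι_comp_sigmaComparison_assoc, ← L.map_comp]
  let Bi : ι → Sheaf K (Type u) := fun i => pullback m (f i)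
  choose A' m' hm' e he using
    fun i => hgen (X i) (hX i) (Bi i) (pullback.snd m (f i)) inferInstance
  let k : (∐ Bi) ⟶ B := Sigma.desc fun i => pullback.fst m (f i)
  -- `k` is an epimorphism, by joint local surjectivity of the family of pullbacks
  haveI hcls : Sheaf.IsLocallySurjective c := by
    rw [Sheaf.isLocallySurjective_iff_epi]; infer_instance
  haveI hkls : Presheaf.IsLocallySurjective K k.hom := by
    constructor
    intro U s
    refine K.transitive
      (Presheaf.imageSieve_mem K c.hom (U := op U) (m.hom.app (op U) s)) _ ?_
    rintro V g ⟨t, ht⟩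
    obtain ⟨S, hS, hSprop⟩ := sigma_jointly_ls K (fun i => L.obj (X i)) t
    refine K.superset_covering ?_ hS
    intro W h hh
    obtain ⟨i, y, hy⟩ := hSprop h hh
    -- the restricted section of `B`
    let sW : B.val.obj (op W) := B.val.map (h ≫ g).op s
    -- key compatibility
    have pf : m.hom.app (op W) sW = (f i).hom.app (op W) y := by
      have n1 : m.hom.app (op W) sW =
          (L.obj A).val.map (h ≫ g).op (m.hom.app (op U) s) :=
        FunctorToTypes.naturality m.hom (h ≫ g).op s
      have n2 : (L.obj A).val.map (h ≫ g).op (m.hom.app (op U) s) =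
          (L.obj A).val.map h.op ((L.obj A).val.map g.op (m.hom.app (op U) s)) := by
        rw [op_comp, (L.obj A).val.map_comp]; rfl
      have n3 : (L.obj A).val.map h.op ((L.obj A).val.map g.op (m.hom.app (op U) s)) =
          (L.obj A).val.map h.op (c.hom.app (op V) t) :=
        congr_arg ((L.obj A).val.map h.op) ht.symm
      have n4 : (L.obj A).val.map h.op (c.hom.app (op V) t) =
          c.hom.app (op W) ((∐ fun i => L.obj (X i)).val.map h.op t) :=
        (ConcreteCategory.congr_hom (c.hom.naturality h.op) t).symm
      have n5 : c.hom.app (op W) ((∐ fun i => L.obj (X i)).val.map h.op t) =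
          c.hom.app (op W) ((Sigma.ι (fun i => L.obj (X i)) i).hom.app (op W) y) := by
        rw [hy]
      have n6 : c.hom.app (op W) ((Sigma.ι (fun i => L.obj (X i)) i).hom.app (op W) y) =
          (f i).hom.app (op W) y := by
        have := hic i
        have := ConcreteCategory.congr_hom (congr_app (congr_arg InducedCategory.Hom.hom this) (op W)) y
        simpa using this
      rw [n1, n2, n3, n4, n5, n6]
    -- build the section of the pullback over `W`
    let G' : Sheaf K (Type u) ⥤ Type u :=
      sheafToPresheaf K (Type u) ⋙ (evaluation Dᵒᵖ (Type u)).obj (op W)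
    haveI : PreservesLimits G' := by infer_instance
    let z0 : pullback (G'.map m) (G'.map (f i)) :=
      (Types.pullbackIsoPullback (G'.map m) (G'.map (f i))).inv ⟨(sW, y), pf⟩
    let z : (Bi i).val.obj (op W) := (PreservesPullback.iso G' m (f i)).inv z0
    refine ⟨(Sigma.ι Bi i).hom.app (op W) z, ?_⟩
    have e1 : k.hom.app (op W) ((Sigma.ι Bi i).hom.app (op W) z) =
        (pullback.fst m (f i)).hom.app (op W) z := by
      have : Sigma.ι Bi i ≫ k = pullback.fst m (f i) := colimit.ι_desc _ _
      exact ConcreteCategory.congr_hom (congr_app (congr_arg InducedCategory.Hom.hom this) (op W)) z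
    have e2 : (pullback.fst m (f i)).hom.app (op W) z =
        pullback.fst (G'.map m) (G'.map (f i)) z0 := by
      have := ConcreteCategory.congr_hom (PreservesPullback.iso_inv_fst G' m (f i)) z0
      exact this
    have e3 : pullback.fst (G'.map m) (G'.map (f i)) z0 = sW :=
      Types.pullbackIsoPullback_inv_fst_apply (G'.map m) (G'.map (f i)) ⟨(sW, y), pf⟩
    exact e1.trans (e2.trans e3)
  haveI hk : Epi k := inferInstance
  -- the comparison iso `∐ Bi ≅ L.obj (∐ A')`
  let ψ : (∐ Bi) ⟶ L.obj (∐ A') :=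
    Limits.Sigma.map (fun i => (e i).hom) ≫ sigmaComparison L A'
  haveI : IsIso ψ := by
    haveI : ∀ i, IsIso ((e i).hom) := fun i => inferInstance
    infer_instance
  let g : (∐ A') ⟶ A := Sigma.desc fun i => m' i ≫ Sigma.ι X i ≫ p
  have hψ : ψ ≫ L.map g = k ≫ m := by
    apply Sigma.hom_ext
    intro i
    have l1 : Sigma.ι A' i ≫ g = m' i ≫ Sigma.ι X i ≫ p := colimit.ι_desc _ _
    have l2 : Sigma.ι Bi i ≫ ψ = (e i).hom ≫ L.map (Sigma.ι A' i) := by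
      simp [ψ]
    have l3 : Sigma.ι Bi i ≫ k ≫ m = pullback.fst m (f i) ≫ m := by
      rw [← Category.assoc]
      congr 1
      exact colimit.ι_desc _ _
    rw [reassoc_of% l2, ← L.map_comp, l1, l3, pullback.condition]
    have l4 : L.map (m' i ≫ Sigma.ι X i ≫ p) = L.map (m' i) ≫ f i := by
      simp only [f]
      rw [← L.map_comp]
    rw [l4, ← Category.assoc, he i]
  -- factor `g` in `E` as a locally surjective followed by a locally injective morphism
  let dat := MorphismProperty.factorizationData
    (Sheaf.locallySurjective J (Type u)) (Sheaf.locallyInjective J (Type u)) g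
  haveI : Sheaf.IsLocallySurjective dat.i := dat.hi
  haveI : Sheaf.IsLocallyInjective dat.p := dat.hp
  haveI : Epi dat.i := inferInstance
  haveI : Mono dat.p := Sheaf.mono_of_isLocallyInjective dat.p
  haveI : Mono (L.map dat.p) := L.map_mono _
  haveI : Epi (L.map dat.i) := L.map_epi _
  -- transfer along the pullback of `L.map dat.p` and `m`
  have hcomm : (ψ ≫ L.map dat.i) ≫ L.map dat.p = k ≫ m := by
    rw [Category.assoc, ← L.map_comp, dat.fac]
    exact hψ
  let u : (∐ Bi) ⟶ pullback (L.map dat.p) m := pullback.lift (ψ ≫ L.map dat.i) k hcomm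
  have hu1 : u ≫ pullback.fst _ _ = ψ ≫ L.map dat.i := pullback.lift_fst _ _ _
  have hu2 : u ≫ pullback.snd _ _ = k := pullback.lift_snd _ _ _
  haveI : Epi (pullback.snd (L.map dat.p) m) := epi_of_epi_fac hu2
  haveI : IsIso (pullback.snd (L.map dat.p) m) := isIso_of_mono_of_epi _
  let t : B ⟶ L.obj dat.Z := inv (pullback.snd (L.map dat.p) m) ≫ pullback.fst _ _
  have ht : t ≫ L.map dat.p = m := by
    rw [Category.assoc, pullback.condition, ← Category.assoc, IsIso.inv_hom_id,
      Category.id_comp]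
  have hkt : k ≫ t = ψ ≫ L.map dat.i := by
    rw [← hu2, Category.assoc, ← Category.assoc (pullback.snd _ _), IsIso.hom_inv_id,
      Category.id_comp, hu1]
  haveI : Epi t := by
    have : Epi (k ≫ t) := by rw [hkt]; infer_instance
    exact epi_of_epi k t
  haveI : Mono t := by
    have : Mono (t ≫ L.map dat.p) := by rw [ht]; infer_instance
    exact mono_of_mono t (L.map dat.p)
  haveI : IsIso t := isIso_of_mono_of_epi t
  exact ⟨dat.Z, dat.p, inferInstance, asIso t, ht⟩


end Stmt15
end

section
/- Let f : F ⟶ E be a geometric morphism between Grothendieck toposes. Then f is an inclusion (embedding) if and only if f* is locally surjective (every object of F admits an epimorphism from an object in the image of f*) and locally full (for every arrow g : f*(x) ⟶ f*(y) in F there exist an arrow s : x' ⟶ x in E with f*(s) an epimorphism and an arrow g' : x' ⟶ y in E such that g ∘ f*(s) = f*(g')). -/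
open CategoryTheory Limits

universe u

namespace Stmt18

/-- Corollary 6.6: a geometric morphism `f : F ⟶ E` between Grothendieck toposes (presented
as sheaf toposes; `L = f*` is the inverse image, left adjoint to the direct image `R = f_*`,
and preserves finite limits) is an inclusion — i.e. its direct image is full and faithful —
if and only if `f*` is locally surjective (every object of `F` admits an epimorphism from an
object in the image of `f*`) and locally full (every arrow `g : f*(x) ⟶ f*(y)` satisfies
`g ∘ f*(s) = f*(g')` for some `s : x' ⟶ x` with `f*(s)` epi and some `g' : x' ⟶ y`). -/
theorem inclusion_iff_locally_surjective_and_locally_full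
    {C D : Type u} [SmallCategory C] [SmallCategory D]
    (J : GrothendieckTopology C) (K : GrothendieckTopology D)
    (L : Sheaf J (Type u) ⥤ Sheaf K (Type u)) (R : Sheaf K (Type u) ⥤ Sheaf J (Type u))
    (adj : L ⊣ R) [PreservesFiniteLimits L] :
    (R.Full ∧ R.Faithful) ↔
      ((∀ b : Sheaf K (Type u), ∃ (a : Sheaf J (Type u)) (p : L.obj a ⟶ b), Epi p) ∧
       (∀ (x y : Sheaf J (Type u)) (g : L.obj x ⟶ L.obj y),
         ∃ (x' : Sheaf J (Type u)) (s : x' ⟶ x) (g' : x' ⟶ y),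
           Epi (L.map s) ∧ L.map s ≫ g = L.map g')) := by
  constructor
  · rintro ⟨hF, hf⟩
    haveI : IsIso adj.counit := adj.counit_isIso_of_R_fully_faithful
    constructor
    · intro b
      exact ⟨R.obj b, adj.counit.app b, inferInstance⟩
    · intro x y g
      have hu : ∀ z : Sheaf J (Type u), IsIso (L.map (adj.unit.app z)) := by
        intro z
        have h := adj.left_triangle_components z
        haveI : IsIso (adj.counit.app (L.obj z)) := inferInstance
        exact IsIso.of_isIso_fac_right (hh := IsIso.id _) h
      refine ⟨pullback (adj.unit.app x ≫ R.map g) (adj.unit.app y),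
        pullback.fst _ _, pullback.snd _ _, ?_, ?_⟩
      · haveI := hu y
        have hp : IsPullback (L.map (pullback.fst (adj.unit.app x ≫ R.map g) (adj.unit.app y)))
            (L.map (pullback.snd _ _)) (L.map (adj.unit.app x ≫ R.map g))
            (L.map (adj.unit.app y)) :=
          (IsPullback.of_hasPullback (adj.unit.app x ≫ R.map g) (adj.unit.app y)).map L
        have hfac := hp.isoPullback_hom_fst
        haveI : IsIso (L.map (pullback.fst (adj.unit.app x ≫ R.map g) (adj.unit.app y))) := by
          rw [← hfac]; infer_instance
        infer_instance
      · have hcomm : pullback.fst (adj.unit.app x ≫ R.map g) (adj.unit.app y)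
            ≫ (adj.unit.app x ≫ R.map g) = pullback.snd _ _ ≫ adj.unit.app y :=
          pullback.condition
        have h2 := congrArg (fun t => L.map t ≫ adj.counit.app (L.obj y)) hcomm
        simpa using h2
  · rintro ⟨hsurj, hfull⟩
    haveI hiso : IsIso adj.counit := by
      have happ : ∀ b, IsIso (adj.counit.app b) := by
        intro b
        have hepi : Epi (adj.counit.app b) := by
          obtain ⟨a, p, hp⟩ := hsurj b
          have hfac : L.map ((adj.homEquiv a b) p) ≫ adj.counit.app b = p := by
            simp [Adjunction.homEquiv_unit]
          exact epi_of_epi_fac hfac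
        have hmono : Mono (adj.counit.app b) := by
          constructor
          intro z u v huv
          obtain ⟨a, q, hq⟩ := hsurj z
          obtain ⟨x1, s1, g1, hs1, h1⟩ := hfull a (R.obj b) (q ≫ u)
          obtain ⟨x2, s2, g2, hs2, h2⟩ := hfull x1 (R.obj b) (L.map s1 ≫ q ≫ v)
          have e1 : L.map (s2 ≫ g1) ≫ adj.counit.app b
              = L.map s2 ≫ L.map s1 ≫ q ≫ u ≫ adj.counit.app b := by
            rw [Functor.map_comp, Category.assoc, ← h1]; simp
          have e2 : L.map g2 ≫ adj.counit.app b
              = L.map s2 ≫ L.map s1 ≫ q ≫ v ≫ adj.counit.app b := by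
            rw [← h2]; simp
          have key : L.map (s2 ≫ g1) ≫ adj.counit.app b = L.map g2 ≫ adj.counit.app b := by
            rw [e1, e2]
            simp only [← Category.assoc]
            rw [Category.assoc _ u, Category.assoc _ v, huv]
          have heq : (s2 ≫ g1 : x2 ⟶ R.obj b) = g2 := by
            apply (adj.homEquiv x2 b).symm.injective
            simpa [Adjunction.homEquiv_counit] using key
          have hLs : L.map s2 ≫ L.map s1 ≫ q ≫ u = L.map s2 ≫ L.map s1 ≫ q ≫ v := by
            calc L.map s2 ≫ L.map s1 ≫ q ≫ u
                = L.map s2 ≫ L.map g1 := by rw [← h1]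
              _ = L.map (s2 ≫ g1) := by rw [Functor.map_comp]
              _ = L.map g2 := by rw [heq]
              _ = L.map s2 ≫ L.map s1 ≫ q ≫ v := h2.symm
          rwa [cancel_epi (L.map s2), cancel_epi (L.map s1), cancel_epi q] at hLs
        exact isIso_of_mono_of_epi _
      exact NatIso.isIso_of_isIso_app adj.counit
    exact ⟨(adj.fullyFaithfulROfIsIsoCounit).full, (adj.fullyFaithfulROfIsIsoCounit).faithful⟩

end Stmt18
end

section
/- Let C be the full subcategory of a Grothendieck topos E on a separating family of objects, and let S be a sieve in C (on an object c ∈ C) such that the colimit in E of the diagram associated to the sieve generated by S in E lies in C. Then S is covering for the topology induced on C by the canonical topology of E if and only if S is effective-epimorphic in C, if and only if S is universally effective-epimorphic in C. -/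
open CategoryTheory Limits Opposite

universe u

namespace Stmt19

attribute [local instance 2000] Sheaf.instHasColimitsOfShape

variable {D : Type u} [SmallCategory D] (J₀ : GrothendieckTopology D)

noncomputable def L : D ⥤ Sheaf J₀ (Type u) := yoneda ⋙ presheafToSheaf J₀ (Type u)

noncomputable def Φ {U : D} {X : Sheaf J₀ (Type u)} :
    ((L J₀).obj U ⟶ X) ≃ X.val.obj (op U) :=
  ((sheafificationAdjunction J₀ (Type u)).homEquiv _ _).trans yonedaEquiv

lemma Φ_comp {U : D} {X Z : Sheaf J₀ (Type u)} (σ : (L J₀).obj U ⟶ X) (g : X ⟶ Z) :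
    Φ J₀ (σ ≫ g) = g.hom.app (op U) (Φ J₀ σ) := by
  simp [Φ, Adjunction.homEquiv_naturality_right, yonedaEquiv_comp]
  rfl

lemma Φ_Lmap {V U : D} {X : Sheaf J₀ (Type u)} (w : V ⟶ U) (σ : (L J₀).obj U ⟶ X) :
    Φ J₀ ((L J₀).map w ≫ σ) = X.val.map w.op (Φ J₀ σ) := by
  have : (L J₀).map w = (presheafToSheaf J₀ (Type u)).map (yoneda.map w) := rfl
  rw [this, Φ]
  erw [Equiv.trans_apply]
  erw [
    Adjunction.homEquiv_naturality_left (sheafificationAdjunction J₀ (Type u)) (yoneda.map w) σ,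
    ← yonedaEquiv_naturality]
  rfl

lemma Φ_symm_map {V U : D} {X : Sheaf J₀ (Type u)} (w : V ⟶ U) (s : X.val.obj (op U)) :
    (Φ J₀).symm (X.val.map w.op s) = (L J₀).map w ≫ (Φ J₀).symm s := by
  apply (Φ J₀).injective
  rw [Equiv.apply_symm_apply, Φ_Lmap, Equiv.apply_symm_apply]

lemma L_hom_ext {X Z : Sheaf J₀ (Type u)} {u v : X ⟶ Z}
    (h : ∀ (U : D) (σ : (L J₀).obj U ⟶ X), σ ≫ u = σ ≫ v) : u = v := by
  apply Sheaf.hom_ext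
  apply NatTrans.ext
  funext U
  ext s
  obtain ⟨U⟩ := U
  have h1 : u.hom.app (op U) s = Φ J₀ ((Φ J₀).symm s ≫ u) := by
    rw [Φ_comp, Equiv.apply_symm_apply]
  have h2 : v.hom.app (op U) s = Φ J₀ ((Φ J₀).symm s ≫ v) := by
    rw [Φ_comp, Equiv.apply_symm_apply]
  exact h1.trans ((congrArg (Φ J₀) (h U _)).trans h2.symm)


-- continuing
/-- The sieve of `w : V ⟶ U` such that `L w ≫ σ` lies in `T`. -/
def RT {X : Sheaf J₀ (Type u)} (T : Sieve X) {U : D} (σ : (L J₀).obj U ⟶ X) : Sieve U where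
  arrows V w := T ((L J₀).map w ≫ σ)
  downward_closed := by
    intro V V' w hw v
    show T ((L J₀).map (v ≫ w) ≫ σ)
    rw [Functor.map_comp, Category.assoc]
    exact T.downward_closed hw _

/-- A sieve is a jointly epimorphic family. -/
def JointlyEpi {X : Sheaf J₀ (Type u)} (T : Sieve X) : Prop :=
  ∀ ⦃Z : Sheaf J₀ (Type u)⦄ (u v : X ⟶ Z),
    (∀ ⦃e : Sheaf J₀ (Type u)⦄ (h : e ⟶ X), T h → h ≫ u = h ≫ v) → u = v

/-- A sieve is "locally surjective". -/
def LocSurj {X : Sheaf J₀ (Type u)} (T : Sieve X) : Prop :=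
  ∀ (U : D) (σ : (L J₀).obj U ⟶ X), RT J₀ T σ ∈ J₀ U

lemma loc_to_epi {X : Sheaf J₀ (Type u)} {T : Sieve X} (hT : LocSurj J₀ T) :
    JointlyEpi J₀ T := by
  intro Z u v huv
  have hZ : Presieve.IsSheaf J₀ Z.val := (isSheaf_iff_isSheaf_of_type _ _).mp Z.cond
  apply L_hom_ext
  intro U σ
  apply (Φ J₀).injective
  apply ((hZ _ (hT U σ)).isSeparatedFor).ext
  intro V w hw
  rw [← Φ_Lmap, ← Φ_Lmap, ← Category.assoc, ← Category.assoc]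
  exact congrArg _ (huv _ hw)

lemma epi_to_loc {X : Sheaf J₀ (Type u)} {T : Sieve X} (hT : JointlyEpi J₀ T) :
    LocSurj J₀ T := by
  classical
  let G : Subfunctor X.val :=
    { obj := fun U => {s | ∃ (e : Sheaf J₀ (Type u)) (h : e ⟶ X) (_ : T h)
        (a : e.val.obj U), h.hom.app U a = s}
      map := by
        rintro U V i s ⟨e, h, hh, a, rfl⟩
        exact ⟨e, h, hh, e.val.map i a, NatTrans.naturality_apply h.hom i a⟩ }
  have hXs : Presieve.IsSheaf J₀ X.val := (isSheaf_iff_isSheaf_of_type _ _).mp X.cond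
  have hAs : Presieve.IsSheaf J₀ (G.sheafify J₀).toFunctor := G.sheafify_isSheaf hXs
  let AS : Sheaf J₀ (Type u) := ⟨(G.sheafify J₀).toFunctor, (isSheaf_iff_isSheaf_of_type _ _).mpr hAs⟩
  let ιA : AS ⟶ X := ⟨(G.sheafify J₀).ι⟩
  have hfac : ∀ ⦃e : Sheaf J₀ (Type u)⦄ (h : e ⟶ X), T h → ∃ l : e ⟶ AS, l ≫ ιA = h := by
    intro e h hh
    refine ⟨⟨Subfunctor.lift h.hom (G := G.sheafify J₀)
      (by rintro U _ ⟨a, rfl⟩; exact G.le_sheafify J₀ _ ⟨e, h, hh, a, rfl⟩)⟩, ?_⟩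
    apply Sheaf.hom_ext
    rfl
  have hmono : Mono ιA := by
    have h1 : Mono ((sheafToPresheaf J₀ (Type u)).map ιA) := by
      show Mono (G.sheafify J₀).ι
      infer_instance
    exact (sheafToPresheaf J₀ (Type u)).mono_of_mono_map h1
  have hepi : Epi ιA := by
    have h0 : (pushout.inl ιA ιA) = (pushout.inr ιA ιA) := by
      apply hT
      intro e h hh
      obtain ⟨l, rfl⟩ := hfac h hh
      rw [Category.assoc, Category.assoc, pushout.condition]
    constructor
    intro Z a b hab
    calc a = pushout.inl ιA ιA ≫ pushout.desc a b hab := (pushout.inl_desc a b hab).symm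
    _ = pushout.inr ιA ιA ≫ pushout.desc a b hab := by rw [h0]
    _ = b := pushout.inr_desc a b hab
  have hiso : IsIso ιA := isIso_of_mono_of_epi ιA
  have hiso2 : IsIso (G.sheafify J₀).ι := by
    have := Functor.map_isIso (sheafToPresheaf J₀ (Type u)) ιA
    exact this
  have hA_top : G.sheafify J₀ = ⊤ := (Subfunctor.eq_top_iff_isIso _).mpr hiso2
  intro U σ
  have hmem : G.sieveOfSection (Φ J₀ σ) ∈ J₀ U := by
    have : Φ J₀ σ ∈ (G.sheafify J₀).obj (op U) := by rw [hA_top]; trivial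
    exact this
  refine J₀.superset_covering ?_ hmem
  rintro V w hw
  obtain ⟨e, h, hh, a, ha⟩ := hw
  show T ((L J₀).map w ≫ σ)
  have e1 : (L J₀).map w ≫ σ = (Φ J₀).symm (X.val.map w.op (Φ J₀ σ)) := by
    rw [Φ_symm_map, Equiv.symm_apply_apply]
  have e2 : (Φ J₀).symm (h.hom.app (op V) a) = (Φ J₀).symm a ≫ h := by
    apply (Φ J₀).injective
    rw [Equiv.apply_symm_apply, Φ_comp, Equiv.apply_symm_apply]
  rw [e1, ← ha, e2]
  exact T.downward_closed hh _


lemma famCongr {C' : Type*} [Category C'] {P : C'ᵒᵖ ⥤ Type*} {X : C'} {R : Presieve X}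
    (x : Presieve.FamilyOfElements P R) {Y : C'} {f g : Y ⟶ X} (h : f = g) (hf : R f)
    (hg : R g) : x f hf = x g hg := by subst h; rfl

lemma isSheafFor_of_locSurj {X : Sheaf J₀ (Type u)} {T : Sieve X} (hT : LocSurj J₀ T)
    (W : Sheaf J₀ (Type u)) : Presieve.IsSheafFor (yoneda.obj W) (T : Presieve X) := by
  have hW : Presieve.IsSheaf J₀ W.val := (isSheaf_iff_isSheaf_of_type _ _).mp W.cond
  intro x hx
  have hx' := hx.to_sieveCompatible
  let y : ∀ {U : D} (σ : (L J₀).obj U ⟶ X),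
      Presieve.FamilyOfElements W.val ((RT J₀ T σ) : Presieve U) :=
    fun {U} σ V w hw => Φ J₀ (x ((L J₀).map w ≫ σ) hw)
  have hy : ∀ {U : D} (σ : (L J₀).obj U ⟶ X), (y σ).Compatible := by
    intro U σ
    rw [Presieve.compatible_iff_sieveCompatible]
    intro V V' w v hw
    show Φ J₀ (x ((L J₀).map (v ≫ w) ≫ σ) _) = W.val.map v.op (Φ J₀ (x ((L J₀).map w ≫ σ) hw))
    have e1 : (L J₀).map (v ≫ w) ≫ σ = (L J₀).map v ≫ ((L J₀).map w ≫ σ) := by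
      rw [Functor.map_comp, Category.assoc]
    have e2 : T ((L J₀).map v ≫ ((L J₀).map w ≫ σ)) := T.downward_closed hw _
    erw [famCongr x e1 _ e2, hx' ((L J₀).map w ≫ σ) ((L J₀).map v) hw]
    exact Φ_Lmap J₀ v _
  let glue : ∀ {U : D} (σ : (L J₀).obj U ⟶ X), W.val.obj (op U) :=
    fun {U} σ => (hW _ (hT U σ)).amalgamate (y σ) (hy σ)
  have glue_spec : ∀ {U : D} (σ : (L J₀).obj U ⟶ X) {V : D} (w : V ⟶ U)
      (hw : RT J₀ T σ w), W.val.map w.op (glue σ) = Φ J₀ (x ((L J₀).map w ≫ σ) hw) :=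
    fun {U} σ {V} w hw => (hW _ (hT U σ)).valid_glue (hy σ) w hw
  have glue_ext : ∀ {U : D} (σ : (L J₀).obj U ⟶ X) (z : W.val.obj (op U)),
      (∀ {V : D} (w : V ⟶ U) (hw : RT J₀ T σ w),
        W.val.map w.op z = Φ J₀ (x ((L J₀).map w ≫ σ) hw)) → z = glue σ := by
    intro U σ z hz
    apply ((hW _ (hT U σ)).isSeparatedFor).ext
    intro V w hw
    rw [hz w hw, glue_spec σ w hw]
  have glue_natural : ∀ {U V : D} (w : V ⟶ U) (σ : (L J₀).obj U ⟶ X),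
      W.val.map w.op (glue σ) = glue ((L J₀).map w ≫ σ) := by
    intro U V w σ
    apply glue_ext
    intro V' v hv
    have hvw : RT J₀ T σ (v ≫ w) := by
      show T ((L J₀).map (v ≫ w) ≫ σ)
      rw [Functor.map_comp, Category.assoc]; exact hv
    calc W.val.map v.op (W.val.map w.op (glue σ))
        = W.val.map (w.op ≫ v.op) (glue σ) := (FunctorToTypes.map_comp_apply _ _ _ _).symm
      _ = W.val.map (v ≫ w).op (glue σ) := rfl
      _ = Φ J₀ (x ((L J₀).map (v ≫ w) ≫ σ) hvw) := glue_spec σ (v ≫ w) hvw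
      _ = Φ J₀ (x ((L J₀).map v ≫ ((L J₀).map w ≫ σ)) hv) := by
          exact congrArg (Φ J₀) (famCongr x (by rw [Functor.map_comp, Category.assoc]) _ _)
  -- the amalgamation
  let t : X ⟶ W := ⟨{
    app := fun U => TypeCat.ofHom (fun s => glue ((Φ J₀).symm s))
    naturality := by
      intro U V i
      ext s
      show glue ((Φ J₀).symm (X.val.map i s)) = W.val.map i (glue ((Φ J₀).symm s))
      have : X.val.map i s = X.val.map (i.unop).op s := rfl
      rw [this, Φ_symm_map]
      exact (glue_natural i.unop ((Φ J₀).symm s)).symm }⟩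
  have hamalg : ∀ ⦃e : Sheaf J₀ (Type u)⦄ (h : e ⟶ X) (hh : T h), h ≫ t = x h hh := by
    intro e h hh
    apply Sheaf.hom_ext
    apply NatTrans.ext
    funext U
    ext a
    obtain ⟨U⟩ := U
    show glue ((Φ J₀).symm (h.hom.app (op U) a)) = (x h hh).hom.app (op U) a
    have e2 : (Φ J₀).symm (h.hom.app (op U) a) = (Φ J₀).symm a ≫ h := by
      apply (Φ J₀).injective
      rw [Equiv.apply_symm_apply, Φ_comp, Equiv.apply_symm_apply]
    have e3 : Φ J₀ ((Φ J₀).symm a ≫ x h hh) = (x h hh).hom.app (op U) a := by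
      rw [Φ_comp, Equiv.apply_symm_apply]
    rw [e2, ← e3]
    symm
    apply glue_ext
    intro V w hw
    rw [← Φ_Lmap]
    have e4 : (L J₀).map w ≫ (Φ J₀).symm a ≫ x h hh
        = ((L J₀).map w ≫ (Φ J₀).symm a) ≫ x h hh := by rw [Category.assoc]
    rw [e4]
    refine congrArg (Φ J₀) ?_
    have e6 : ((L J₀).map w ≫ (Φ J₀).symm a) ≫ x h hh
        = x (((L J₀).map w ≫ (Φ J₀).symm a) ≫ h) (T.downward_closed hh _) :=
      (hx' h ((L J₀).map w ≫ (Φ J₀).symm a) hh).symm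
    rw [e6]
    exact famCongr x (by rw [Category.assoc]) _ _
  refine ⟨t, fun {e} h hh => hamalg h hh, ?_⟩
  intro t' ht'
  apply loc_to_epi J₀ hT t' t
  intro e h hh
  exact (ht' h hh).trans (hamalg h hh).symm


section Main

variable {P : Sheaf J₀ (Type u) → Prop}

lemma detect (hsep : ∀ e : Sheaf J₀ (Type u), ∃ (κ : Type u) (X : κ → Sheaf J₀ (Type u)),
      (∀ i, P (X i)) ∧ ∃ p : (∐ X) ⟶ e, Epi p)
    {Z Z' : Sheaf J₀ (Type u)} (u v : Z ⟶ Z')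
    (h : ∀ (d : ObjectProperty.FullSubcategory P) (a : (ObjectProperty.ι P).obj d ⟶ Z),
      a ≫ u = a ≫ v) : u = v := by
  obtain ⟨κ, Xs, hXs, p, hp⟩ := hsep Z
  have h1 : p ≫ u = p ≫ v := by
    apply Sigma.hom_ext
    intro i
    have := h ⟨Xs i, hXs i⟩ (Sigma.ι Xs i ≫ p)
    simpa [Category.assoc] using this
  exact (cancel_epi p).mp h1

lemma pushforward_reflect {c : ObjectProperty.FullSubcategory P} (S : Sieve c) {d : ObjectProperty.FullSubcategory P}
    (g : d ⟶ c)
    (h : (S.functorPushforward (ObjectProperty.ι P)).arrows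
      ((ObjectProperty.ι P).map g)) : S g := by
  obtain ⟨d', g', k, hg', e⟩ := h
  have e' : g = (ObjectProperty.homMk k) ≫ g' := InducedCategory.hom_ext e
  rw [e']
  exact S.downward_closed hg' _




lemma jointlyEpi_pushforward_pullback
    (hsep : ∀ e : Sheaf J₀ (Type u), ∃ (κ : Type u) (X : κ → Sheaf J₀ (Type u)),
      (∀ i, P (X i)) ∧ ∃ p : (∐ X) ⟶ e, Epi p)
    {c : ObjectProperty.FullSubcategory P} (S : Sieve c)
    (hI : ∀ {Z : Sheaf J₀ (Type u)}
        (u v : (ObjectProperty.ι P).obj c ⟶ Z),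
        (∀ ⦃d : ObjectProperty.FullSubcategory P⦄ (f : d ⟶ c), S.arrows f →
          (ObjectProperty.ι P).map f ≫ u = (ObjectProperty.ι P).map f ≫ v) →
        u = v)
    {c' : ObjectProperty.FullSubcategory P} (f : c' ⟶ c) :
    JointlyEpi J₀ ((S.pullback f).functorPushforward (ObjectProperty.ι P)) := by
  have hT0 : JointlyEpi J₀ (S.functorPushforward (ObjectProperty.ι P)) := by
    intro Z u v h
    apply hI u v
    intro d g hg
    exact h ((ObjectProperty.ι P).map g) ⟨d, g, 𝟙 _, hg, (Category.id_comp _).symm⟩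
  have hT' : JointlyEpi J₀
      ((S.functorPushforward (ObjectProperty.ι P)).pullback
        ((ObjectProperty.ι P).map f)) := by
    apply loc_to_epi
    intro U σ
    have e1 : RT J₀ ((S.functorPushforward (ObjectProperty.ι P)).pullback
        ((ObjectProperty.ι P).map f)) σ
        = RT J₀ (S.functorPushforward (ObjectProperty.ι P))
            (σ ≫ (ObjectProperty.ι P).map f) := by
      ext V w
      show (S.functorPushforward (ObjectProperty.ι P)).arrows
          (((L J₀).map w ≫ σ) ≫ (ObjectProperty.ι P).map f) ↔ _
      rw [Category.assoc]
      exact Iff.rfl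
    rw [e1]
    exact (epi_to_loc J₀ hT0) U (σ ≫ (ObjectProperty.ι P).map f)
  intro Z u v h
  apply hT' u v
  intro e h' hh'
  obtain ⟨κ, Xs, hXs, p, hp⟩ := hsep e
  have h1 : p ≫ h' ≫ u = p ≫ h' ≫ v := by
    apply Sigma.hom_ext
    intro i
    have mem : ((S.pullback f).functorPushforward (ObjectProperty.ι P)).arrows
        ((Sigma.ι Xs i ≫ p) ≫ h') := by
      have mem0 : (S.functorPushforward (ObjectProperty.ι P)).arrows
          ((Sigma.ι Xs i ≫ p) ≫ h' ≫ (ObjectProperty.ι P).map f) :=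
        Sieve.downward_closed _ hh' _
      let a : (⟨Xs i, hXs i⟩ : ObjectProperty.FullSubcategory P) ⟶ c' :=
        ObjectProperty.homMk ((Sigma.ι Xs i ≫ p) ≫ h')
      refine ⟨⟨Xs i, hXs i⟩, a, 𝟙 _, ?_, ?_⟩
      · show S.arrows (a ≫ f)
        apply pushforward_reflect J₀ S
        show (S.functorPushforward (ObjectProperty.ι P)).arrows
          (((Sigma.ι Xs i ≫ p) ≫ h') ≫ (ObjectProperty.ι P).map f)
        rw [Category.assoc]
        exact mem0
      · show (Sigma.ι Xs i ≫ p) ≫ h' = 𝟙 (Xs i) ≫ ((Sigma.ι Xs i ≫ p) ≫ h')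
        rw [Category.id_comp]
    have := h _ mem
    simpa [Category.assoc] using this
  have h2 : h' ≫ u = h' ≫ v := (cancel_epi p).mp h1
  exact h2


lemma isSheafFor_pullback
    (hsep : ∀ e : Sheaf J₀ (Type u), ∃ (κ : Type u) (X : κ → Sheaf J₀ (Type u)),
      (∀ i, P (X i)) ∧ ∃ p : (∐ X) ⟶ e, Epi p)
    {c : ObjectProperty.FullSubcategory P} (S : Sieve c)
    (hI : ∀ {Z : Sheaf J₀ (Type u)}
        (u v : (ObjectProperty.ι P).obj c ⟶ Z),
        (∀ ⦃d : ObjectProperty.FullSubcategory P⦄ (f : d ⟶ c), S.arrows f →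
          (ObjectProperty.ι P).map f ≫ u = (ObjectProperty.ι P).map f ≫ v) →
        u = v)
    {c' : ObjectProperty.FullSubcategory P} (f : c' ⟶ c) (W : ObjectProperty.FullSubcategory P) :
    Presieve.IsSheafFor (yoneda.obj W) ((S.pullback f) : Presieve c') := by
  intro x hx
  have hT'' : JointlyEpi J₀ ((S.pullback f).functorPushforward (ObjectProperty.ι P)) :=
    jointlyEpi_pushforward_pullback J₀ hsep S hI f
  have hSheafE := isSheafFor_of_locSurj J₀ (epi_to_loc J₀ hT'')
    ((ObjectProperty.ι P).obj W)
  let xbar : Presieve.FamilyOfElements (yoneda.obj ((ObjectProperty.ι P).obj W))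
      (((S.pullback f).functorPushforward (ObjectProperty.ι P)) :
        Presieve ((ObjectProperty.ι P).obj c')) := fun e h hh =>
    (Presieve.getFunctorPushforwardStructure hh).lift ≫
      (
        x (Presieve.getFunctorPushforwardStructure hh).premap
          (Presieve.getFunctorPushforwardStructure hh).cover).hom
  have hxbar : xbar.Compatible := by
    intro e₁ e₂ Z b₁ b₂ h₁ h₂ hh₁ hh₂ hcomm
    show b₁ ≫ xbar h₁ hh₁ = b₂ ≫ xbar h₂ hh₂
    apply detect J₀ hsep
    intro d a
    set s₁ := Presieve.getFunctorPushforwardStructure hh₁ with hs₁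
    set s₂ := Presieve.getFunctorPushforwardStructure hh₂ with hs₂
    let m₁ : d ⟶ s₁.preobj :=
      ObjectProperty.homMk (a ≫ b₁ ≫ s₁.lift)
    let m₂ : d ⟶ s₂.preobj :=
      ObjectProperty.homMk (a ≫ b₂ ≫ s₂.lift)
    have hcomp : m₁ ≫ s₁.premap = m₂ ≫ s₂.premap := by
      apply InducedCategory.hom_ext
      show (a ≫ b₁ ≫ s₁.lift) ≫ (ObjectProperty.ι P).map s₁.premap
        = (a ≫ b₂ ≫ s₂.lift) ≫ (ObjectProperty.ι P).map s₂.premap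
      simp only [Category.assoc]
      rw [← s₁.fac, ← s₂.fac, hcomm]
    have hx12 := hx m₁ m₂ s₁.cover s₂.cover hcomp
    have goal' : (a ≫ b₁ ≫ s₁.lift) ≫
        (
          x s₁.premap s₁.cover).hom
        = (a ≫ b₂ ≫ s₂.lift) ≫
        (
          x s₂.premap s₂.cover).hom := congrArg InducedCategory.Hom.hom hx12
    show a ≫ b₁ ≫ (s₁.lift ≫ _) = a ≫ b₂ ≫ (s₂.lift ≫ _)
    simpa only [Category.assoc] using goal'
  obtain ⟨tE, htE, huniq⟩ := hSheafE xbar hxbar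
  refine ⟨ObjectProperty.homMk tE, ?_, ?_⟩
  · intro d g hg
    have hmem : ((S.pullback f).functorPushforward (ObjectProperty.ι P)).arrows
        ((ObjectProperty.ι P).map g) := ⟨d, g, 𝟙 _, hg, (Category.id_comp _).symm⟩
    have h1 := htE _ hmem
    set s := Presieve.getFunctorPushforwardStructure hmem with hs
    have hlam : (ObjectProperty.homMk s.lift) ≫ s.premap = 𝟙 d ≫ g := by
      apply InducedCategory.hom_ext
      show s.lift ≫ (ObjectProperty.ι P).map s.premap
          = 𝟙 ((ObjectProperty.ι P).obj d) ≫ (ObjectProperty.ι P).map g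
      rw [← s.fac, Category.id_comp]
    have h2 := hx (ObjectProperty.homMk s.lift) (𝟙 d) s.cover hg hlam
    have h4 : xbar ((ObjectProperty.ι P).map g) hmem = (x g hg).hom := by
      refine (congrArg InducedCategory.Hom.hom h2).trans ?_
      show 𝟙 ((ObjectProperty.ι P).obj d) ≫ (x g hg).hom = (x g hg).hom
      rw [Category.id_comp]
    exact InducedCategory.hom_ext (h1.trans h4)
  · intro t' ht'
    refine InducedCategory.hom_ext (huniq t'.hom ?_)
    intro e h hh
    set s := Presieve.getFunctorPushforwardStructure hh with hs
    have h3 : (ObjectProperty.ι P).map s.premap ≫ t'.hom = (x s.premap s.cover).hom :=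
      congrArg InducedCategory.Hom.hom (ht' s.premap s.cover)
    show h ≫ t'.hom = xbar h hh
    calc h ≫ t'.hom = (s.lift ≫ (ObjectProperty.ι P).map s.premap) ≫ t'.hom := by rw [← s.fac]
      _ = s.lift ≫ ((ObjectProperty.ι P).map s.premap ≫ t'.hom) := by rw [Category.assoc]
      _ = xbar h hh := by rw [h3]

lemma epiFamily_of_effectiveEpimorphic
    {c : ObjectProperty.FullSubcategory P} (S : Sieve c)
    (hcolim : ∃ cc : Cocone
        ((Sieve.functorPushforward (ObjectProperty.ι P) S).arrows.diagram),
      Nonempty (IsColimit cc) ∧ P cc.pt)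
    (hS : S.EffectiveEpimorphic) :
    ∀ {Z : Sheaf J₀ (Type u)} (u v : (ObjectProperty.ι P).obj c ⟶ Z),
      (∀ ⦃d : ObjectProperty.FullSubcategory P⦄ (f : d ⟶ c), S.arrows f →
        (ObjectProperty.ι P).map f ≫ u = (ObjectProperty.ι P).map f ≫ v) →
      u = v := by
  obtain ⟨cc, ⟨hcc⟩, hP⟩ := hcolim
  obtain ⟨hcolS⟩ := hS
  let φ : cc.pt ⟶ (ObjectProperty.ι P).obj c :=
    hcc.desc (Sieve.functorPushforward (ObjectProperty.ι P) S).arrows.cocone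
  have hφ : ∀ (j : (Sieve.functorPushforward (ObjectProperty.ι P) S).arrows.category),
      cc.ι.app j ≫ φ = j.obj.hom := fun j => hcc.fac _ j
  let c₀ : ObjectProperty.FullSubcategory P := ⟨cc.pt, hP⟩
  let Fobj : S.arrows.category →
      (Sieve.functorPushforward (ObjectProperty.ι P) S).arrows.category := fun j =>
    ⟨Over.mk ((ObjectProperty.ι P).map j.obj.hom),
      ⟨j.obj.left, j.obj.hom, 𝟙 _, j.property, (Category.id_comp _).symm⟩⟩
  let K : Cocone S.arrows.diagram :=
    { pt := c₀
      ι := { app := fun j => ObjectProperty.homMk (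
                cc.ι.app (Fobj j))
             naturality := by
               intro j j' q
               have hw : (show (ObjectProperty.ι P).obj j.obj.left ⟶
                   (ObjectProperty.ι P).obj j'.obj.left from q.hom.left.hom) ≫
                   (ObjectProperty.ι P).map j'.obj.hom
                   = (ObjectProperty.ι P).map j.obj.hom := congrArg InducedCategory.Hom.hom (Over.w q.hom)
               have := cc.ι.naturality ((ObjectProperty.homMk (Over.homMk
                 (show (ObjectProperty.ι P).obj j.obj.left ⟶
                   (ObjectProperty.ι P).obj j'.obj.left from q.hom.left.hom) hw) : Fobj j ⟶ Fobj j'))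
               exact InducedCategory.hom_ext this } }
  let ρ : c ⟶ c₀ := hcolS.desc K
  have hρ : ∀ (j : S.arrows.category), (S.arrows.cocone).ι.app j ≫ ρ = K.ι.app j :=
    fun j => hcolS.fac K j
  have hsplit : ρ ≫ (ObjectProperty.homMk φ : c₀ ⟶ c) = 𝟙 c := by
    apply hcolS.hom_ext
    intro j
    apply InducedCategory.hom_ext
    have h5 : (S.arrows.cocone.ι.app j).hom ≫ ρ.hom = cc.ι.app (Fobj j) :=
      congrArg InducedCategory.Hom.hom (hρ j)
    exact (Category.assoc (S.arrows.cocone.ι.app j).hom ρ.hom φ).symm.trans ((congrArg (· ≫ φ) h5).trans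
      ((hφ (Fobj j)).trans (Category.comp_id _).symm))
  intro Z u v huv
  have h1 : φ ≫ u = φ ≫ v := by
    apply hcc.hom_ext
    intro j
    rw [← Category.assoc, ← Category.assoc, hφ j]
    obtain ⟨d, g, k, hg, e⟩ := j.property
    rw [e]
    exact (Category.assoc _ _ _).trans ((congrArg (k ≫ ·) (huv g hg)).trans (Category.assoc _ _ _).symm)
  have hsplitE : ρ.hom ≫ φ
      = 𝟙 ((ObjectProperty.ι P).obj c) := congrArg InducedCategory.Hom.hom hsplit
  calc u = (ρ.hom ≫ φ) ≫ u := by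
        rw [hsplitE]; exact (Category.id_comp u).symm
    _ = ρ.hom ≫ (φ ≫ u) := by
        rw [Category.assoc]
    _ = ρ.hom ≫ (φ ≫ v) := by rw [h1]
    _ = (ρ.hom ≫ φ) ≫ v := by
        rw [Category.assoc]
    _ = v := by rw [hsplitE]; exact Category.id_comp v

end Main

/-- Lemma 4.20: let `C` be the full subcategory of a Grothendieck topos `E` (presented as a
sheaf topos) on a separating family of objects (those satisfying `P`), and `S` a sieve in `C`
on an object `c` such that the colimit in `E` of the diagram associated to the sieve generated
by `S` in `E` lies in `C`.  Then the following are equivalent: (i) `S` is covering for the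
topology induced on `C` by the canonical topology of `E` (i.e. the family `ι(S)` is
epimorphic in `E`); (ii) `S` is effective-epimorphic in `C`; (iii) `S` is universally
effective-epimorphic in `C`. -/
theorem induced_canonical_cover_iff_effectiveEpimorphic
    {D : Type u} [SmallCategory D] (J₀ : GrothendieckTopology D)
    (P : Sheaf J₀ (Type u) → Prop)
    (hsep : ∀ e : Sheaf J₀ (Type u), ∃ (ι : Type u) (X : ι → Sheaf J₀ (Type u)),
      (∀ i, P (X i)) ∧ ∃ p : (∐ X) ⟶ e, Epi p)
    (c : ObjectProperty.FullSubcategory P) (S : Sieve c)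
    (hcolim : ∃ cc : Cocone
        ((Sieve.functorPushforward (ObjectProperty.ι P) S).arrows.diagram),
      Nonempty (IsColimit cc) ∧ P cc.pt) :
    ((∀ {Z : Sheaf J₀ (Type u)}
        (u v : (ObjectProperty.ι P).obj c ⟶ Z),
        (∀ ⦃d : ObjectProperty.FullSubcategory P⦄ (f : d ⟶ c), S.arrows f →
          (ObjectProperty.ι P).map f ≫ u = (ObjectProperty.ι P).map f ≫ v) →
        u = v)
      ↔ S.EffectiveEpimorphic) ∧
    (S.EffectiveEpimorphic ↔
      ∀ ⦃c' : ObjectProperty.FullSubcategory P⦄ (f : c' ⟶ c), (S.pullback f).EffectiveEpimorphic) := by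
  constructor
  · constructor
    · intro hI
      have hsheaf := isSheafFor_pullback J₀ hsep S (fun {Z} u v h => hI u v h) (𝟙 c)
      have heff : (S.pullback (𝟙 c)).EffectiveEpimorphic :=
        (Sieve.forallYonedaIsSheaf_iff_colimit _).mp (fun W => hsheaf W)
      rwa [Sieve.pullback_id] at heff
    · intro hS
      exact epiFamily_of_effectiveEpimorphic J₀ S hcolim hS
  · constructor
    · intro hS c' f
      have hsheaf := isSheafFor_pullback J₀ hsep S
        (fun {Z} u v h => epiFamily_of_effectiveEpimorphic J₀ S hcolim hS u v h) f
      exact (Sieve.forallYonedaIsSheaf_iff_colimit _).mp (fun W => hsheaf W)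
    · intro h
      have := h (𝟙 c)
      rwa [Sieve.pullback_id] at this

end Stmt19
end
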